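/- arXiv:2507.02739 — 5 statements merged into one kernel-verified Lean document; each statement's English description precedes it below -/
import Mathlib

section
/- For all sufficiently large x, the function Ψ_x changes sign exactly once on (0,∞): it is strictly positive on (0, ρ_x) and strictly negative on (ρ_x, ∞) outside of the single point ρ_x; moreover there is an absolute constant C such that |Ψ_x(ρ_x)| ≤ C e^{−ρ_x} for all x ≥ 3 (with the convention Ψ_x(ρ_x) taken as the value of Ψ_x at ρ_x). -/
open Real Filter Finset

/-- `Ψ_x(v) = (log log x)/v² − ∑_{q < e^v, q prime} 1/(q−1+v)`. -/
noncomputable def Psi (x v : ℝ) : ℝ :=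
  Real.log (Real.log x) / v ^ 2 -
    ∑ q ∈ (Finset.range ⌈Real.exp v⌉₊).filter Nat.Prime, 1 / ((q : ℝ) - 1 + v)

/-- `ρ_x = inf {v > 0 : Ψ_x(v) ≤ 0}`. -/
noncomputable def rho (x : ℝ) : ℝ := sInf {v : ℝ | 0 < v ∧ Psi x v ≤ 0}

namespace PsiAux

noncomputable def Aset (v : ℝ) : Finset ℕ := (Finset.range ⌈Real.exp v⌉₊).filter Nat.Prime

noncomputable def Ssum (v : ℝ) : ℝ := ∑ q ∈ Aset v, 1 / ((q : ℝ) - 1 + v)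

noncomputable def Tset (ξ : ℝ) : Set ℝ := {v : ℝ | 0 < v ∧ ξ / v ^ 2 - Ssum v ≤ 0}

lemma Psi_eq (x v : ℝ) : Psi x v = Real.log (Real.log x) / v ^ 2 - Ssum v := rfl

lemma rho_eq (x : ℝ) : rho x = sInf (Tset (Real.log (Real.log x))) := rfl

lemma mem_Aset {q : ℕ} {v : ℝ} : q ∈ Aset v ↔ q < ⌈Real.exp v⌉₊ ∧ q.Prime := by
  simp [Aset, Finset.mem_filter, Finset.mem_range]

lemma Aset_mono {v w : ℝ} (h : v ≤ w) : Aset v ⊆ Aset w := by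
  intro q hq
  rw [mem_Aset] at hq ⊢
  exact ⟨lt_of_lt_of_le hq.1 (Nat.ceil_le_ceil (Real.exp_le_exp.2 h)), hq.2⟩

lemma two_le_of_mem {q : ℕ} {v : ℝ} (hq : q ∈ Aset v) : 2 ≤ q :=
  (mem_Aset.1 hq).2.two_le

lemma denom_pos {q : ℕ} {v : ℝ} (hq : 2 ≤ q) (hv : 0 < v) : 0 < (q : ℝ) - 1 + v := by
  have : (2 : ℝ) ≤ q := by exact_mod_cast hq
  linarith

lemma denom_ge_one {q : ℕ} {v : ℝ} (hq : 2 ≤ q) (hv : 0 < v) : 1 < (q : ℝ) - 1 + v := by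
  have : (2 : ℝ) ≤ q := by exact_mod_cast hq
  linarith

lemma Ssum_nonneg {v : ℝ} (hv : 0 < v) : 0 ≤ Ssum v := by
  refine Finset.sum_nonneg fun q hq => ?_
  have := denom_pos (two_le_of_mem hq) hv
  positivity

lemma two_mem_Aset {v : ℝ} (hv : Real.log 2 < v) : 2 ∈ Aset v := by
  rw [mem_Aset]
  refine ⟨Nat.lt_ceil.2 ?_, Nat.prime_two⟩
  have : Real.exp (Real.log 2) < Real.exp v := Real.exp_lt_exp.2 hv
  rwa [Real.exp_log (by norm_num : (0:ℝ) < 2)] at this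

lemma mem_T_gt {ξ : ℝ} (hξ : 0 < ξ) {w : ℝ} (hw : w ∈ Tset ξ) : Real.log 2 < w := by
  obtain ⟨hw0, hwle⟩ := hw
  by_contra h
  push_neg at h
  have hceil : ⌈Real.exp w⌉₊ ≤ 2 := by
    refine Nat.ceil_le.2 ?_
    have : Real.exp w ≤ Real.exp (Real.log 2) := Real.exp_le_exp.2 h
    rwa [Real.exp_log (by norm_num : (0:ℝ) < 2)] at this
  have hA : Aset w = ∅ := by
    refine Finset.eq_empty_of_forall_notMem fun q hq => ?_
    have h1 := (mem_Aset.1 hq).1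
    have h2 := two_le_of_mem hq
    omega
  have hS : Ssum w = 0 := by rw [Ssum, hA, Finset.sum_empty]
  rw [hS, sub_zero] at hwle
  have : 0 < ξ / w ^ 2 := by positivity
  linarith

lemma T_nonempty {ξ : ℝ} (hξ : 0 < ξ) : (Tset ξ).Nonempty := by
  set v₀ : ℝ := max 1 (2 * ξ) with hv₀def
  have hv₀1 : (1:ℝ) ≤ v₀ := le_max_left _ _
  have hv₀ξ : 2 * ξ ≤ v₀ := le_max_right _ _
  have hv₀0 : 0 < v₀ := lt_of_lt_of_le one_pos hv₀1
  have hlog2 : Real.log 2 < v₀ := lt_of_lt_of_le (by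
    have := Real.log_two_lt_d9; linarith) hv₀1
  have h2mem : 2 ∈ Aset v₀ := two_mem_Aset hlog2
  have hS : 1 / (1 + v₀) ≤ Ssum v₀ := by
    have h := Finset.single_le_sum (f := fun q : ℕ => 1 / ((q : ℝ) - 1 + v₀))
      (fun q hq => by have := denom_pos (two_le_of_mem hq) hv₀0; positivity) h2mem
    rw [Ssum]
    refine le_trans (le_of_eq ?_) h
    norm_num
  refine ⟨v₀, hv₀0, ?_⟩
  have hkey : ξ / v₀ ^ 2 ≤ 1 / (1 + v₀) := by
    rw [div_le_div_iff₀ (by positivity) (by positivity)]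
    nlinarith
  linarith

lemma T_bdd {ξ : ℝ} : BddBelow (Tset ξ) := ⟨0, fun t ht => le_of_lt ht.1⟩

lemma log_two_le_rho {ξ : ℝ} (hξ : 0 < ξ) : Real.log 2 ≤ sInf (Tset ξ) :=
  le_csInf (T_nonempty hξ) fun t ht => (mem_T_gt hξ ht).le

lemma rho_pos {ξ : ℝ} (hξ : 0 < ξ) : 0 < sInf (Tset ξ) :=
  lt_of_lt_of_le (Real.log_pos one_lt_two) (log_two_le_rho hξ)

lemma exp_rho_ge_two {ξ : ℝ} (hξ : 0 < ξ) : (2:ℝ) ≤ Real.exp (sInf (Tset ξ)) := by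
  have := Real.exp_le_exp.2 (log_two_le_rho hξ)
  rwa [Real.exp_log (by norm_num : (0:ℝ) < 2)] at this

lemma psi_pos {ξ : ℝ} (hξ : 0 < ξ) {v : ℝ} (h0 : 0 < v) (hv : v < sInf (Tset ξ)) :
    0 < ξ / v ^ 2 - Ssum v := by
  by_contra h
  push_neg at h
  exact absurd (csInf_le T_bdd ⟨h0, h⟩) (not_le.2 hv)

lemma psi_neg {ξ : ℝ} (hξ : 0 < ξ) {v : ℝ} (hv : sInf (Tset ξ) < v) :
    ξ / v ^ 2 - Ssum v < 0 := by
  obtain ⟨w, hwT, hwv⟩ := exists_lt_of_csInf_lt (T_nonempty hξ) hv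
  have hw2 : Real.log 2 < w := mem_T_gt hξ hwT
  have hw0 : 0 < w := hwT.1
  have hv0 : 0 < v := hw0.trans hwv
  have hξw' : ξ ≤ w ^ 2 * Ssum w := by
    have h1 : ξ / w ^ 2 ≤ Ssum w := sub_nonpos.1 hwT.2
    calc ξ = w ^ 2 * (ξ / w ^ 2) := by field_simp
    _ ≤ w ^ 2 * Ssum w := by nlinarith [sq_nonneg w]
  have hmono : w ^ 2 * Ssum w < v ^ 2 * Ssum v := by
    have e1 : w ^ 2 * Ssum w = ∑ q ∈ Aset w, w ^ 2 / ((q : ℝ) - 1 + w) := by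
      rw [Ssum, Finset.mul_sum]
      exact Finset.sum_congr rfl fun q _ => by ring
    have e2 : v ^ 2 * Ssum v = ∑ q ∈ Aset v, v ^ 2 / ((q : ℝ) - 1 + v) := by
      rw [Ssum, Finset.mul_sum]
      exact Finset.sum_congr rfl fun q _ => by ring
    rw [e1, e2]
    have step1 : ∑ q ∈ Aset w, w ^ 2 / ((q : ℝ) - 1 + w)
        < ∑ q ∈ Aset w, v ^ 2 / ((q : ℝ) - 1 + v) := by
      refine Finset.sum_lt_sum_of_nonempty ⟨2, two_mem_Aset hw2⟩ fun q hq => ?_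
      have hq2 : (2:ℝ) ≤ q := by exact_mod_cast two_le_of_mem hq
      rw [div_lt_div_iff₀ (by linarith) (by linarith)]
      have key : 0 < (v - w) * (((q:ℝ) - 1) * (v + w) + v * w) :=
        mul_pos (by linarith) (by nlinarith)
      nlinarith [key]
    refine step1.trans_le (Finset.sum_le_sum_of_subset_of_nonneg (Aset_mono hwv.le)
      fun q hq _ => ?_)
    have := denom_pos (two_le_of_mem hq) hv0
    positivity
  have : ξ < v ^ 2 * Ssum v := lt_of_le_of_lt hξw' hmono
  rw [sub_neg, div_lt_iff₀ (by positivity)]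
  linarith

lemma Ssum_rho_le {ξ : ℝ} (hξ : 0 < ξ) :
    sInf (Tset ξ) ^ 2 * Ssum (sInf (Tset ξ)) ≤ ξ := by
  set ρ := sInf (Tset ξ) with hρdef
  have hρ0 : 0 < ρ := rho_pos hξ
  have hexp2 : (2:ℝ) ≤ Real.exp ρ := exp_rho_ge_two hξ
  refine le_of_forall_pos_le_add fun δ hδ => ?_
  set n := ⌈Real.exp ρ⌉₊ with hndef
  have hn2 : 2 ≤ n := by
    have h1 : 1 < n := Nat.lt_ceil.2 (by push_cast; linarith)
    omega
  have hn2' : (2:ℝ) ≤ n := by exact_mod_cast hn2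
  have hn1 : ((n:ℝ)) - 1 < Real.exp ρ := by
    have := Nat.ceil_lt_add_one (Real.exp_nonneg ρ)
    rw [← hndef] at this
    linarith
  have hlognρ : Real.log ((n:ℝ) - 1) < ρ := by
    have h := Real.log_lt_log (by linarith : (0:ℝ) < (n:ℝ) - 1) hn1
    rwa [Real.log_exp] at h
  set c := ((Aset ρ).card : ℝ) with hcdef
  have hc0 : (0:ℝ) ≤ c := Nat.cast_nonneg _
  have h2ρc : (0:ℝ) < 2*ρ*c + 1 := by
    have := mul_nonneg (mul_nonneg (by norm_num : (0:ℝ) ≤ 2) hρ0.le) hc0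
    linarith
  set η := min (ρ/2) (δ / (2*ρ*c + 1)) with hηdef
  have hη0 : 0 < η := lt_min (by linarith) (div_pos hδ h2ρc)
  have hηρ : η ≤ ρ/2 := min_le_left _ _
  set v := max ((Real.log ((n:ℝ)-1) + ρ)/2) (ρ - η) with hvdef
  have hv_lt : v < ρ := max_lt (by linarith) (by linarith)
  have hv_pos : 0 < v := lt_of_lt_of_le (by linarith : (0:ℝ) < ρ - η) (le_max_right _ _)
  have hv_gt_log : Real.log ((n:ℝ)-1) < v :=
    lt_of_lt_of_le (by linarith) (le_max_left _ _)
  have hρv : ρ - v ≤ η := by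
    have := le_max_right ((Real.log ((n:ℝ)-1) + ρ)/2) (ρ - η)
    rw [← hvdef] at this
    linarith
  have hceil_eq : ⌈Real.exp v⌉₊ = n := by
    refine le_antisymm (Nat.ceil_le.2 ((Real.exp_le_exp.2 hv_lt.le).trans (Nat.le_ceil _))) ?_
    have hlt : ((n - 1 : ℕ) : ℝ) < Real.exp v := by
      have h1 : Real.exp (Real.log ((n:ℝ)-1)) < Real.exp v := Real.exp_lt_exp.2 hv_gt_log
      rw [Real.exp_log (by linarith)] at h1
      have : ((n - 1 : ℕ) : ℝ) = (n:ℝ) - 1 := by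
        push_cast [Nat.cast_sub (by omega : 1 ≤ n)]; ring
      linarith [this ▸ h1]
    have := Nat.lt_ceil.2 hlt
    omega
  have hAv : Aset v = Aset ρ := by
    unfold Aset
    rw [hceil_eq, hndef]
  have hdiff : ρ^2 * Ssum ρ - v^2 * Ssum v ≤ c * (ρ^2 - v^2) := by
    rw [Ssum, Ssum, hAv, Finset.mul_sum, Finset.mul_sum, ← Finset.sum_sub_distrib]
    have hstep : ∀ q ∈ Aset ρ,
        ρ^2 * (1/((q:ℝ)-1+ρ)) - v^2 * (1/((q:ℝ)-1+v)) ≤ ρ^2 - v^2 := by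
      intro q hq
      have hq2 : (2:ℝ) ≤ q := by exact_mod_cast two_le_of_mem hq
      have hdv : 1 < (q:ℝ)-1+v := by linarith
      have h1 : ρ^2 * (1/((q:ℝ)-1+ρ)) ≤ ρ^2 * (1/((q:ℝ)-1+v)) :=
        mul_le_mul_of_nonneg_left
          (one_div_le_one_div_of_le (by linarith) (by linarith)) (sq_nonneg ρ)
      have heq : ρ^2 * (1/((q:ℝ)-1+v)) - v^2 * (1/((q:ℝ)-1+v))
          = (ρ^2-v^2) * (1/((q:ℝ)-1+v)) := by ring
      have h3 : 1/((q:ℝ)-1+v) ≤ 1 := by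
        rw [div_le_one (by linarith)]; linarith
      have h2 : (ρ^2-v^2) * (1/((q:ℝ)-1+v)) ≤ ρ^2 - v^2 :=
        mul_le_of_le_one_right (by nlinarith) h3
      linarith
    calc ∑ q ∈ Aset ρ, (ρ^2 * (1/((q:ℝ)-1+ρ)) - v^2 * (1/((q:ℝ)-1+v)))
        ≤ ∑ _q ∈ Aset ρ, (ρ^2 - v^2) := Finset.sum_le_sum hstep
      _ = c * (ρ^2-v^2) := by rw [Finset.sum_const, nsmul_eq_mul]
  have hv2S : v^2 * Ssum v ≤ ξ := by
    have hpos := psi_pos hξ hv_pos hv_lt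
    have h1 : Ssum v ≤ ξ / v^2 := by linarith
    calc v^2 * Ssum v ≤ v^2 * (ξ/v^2) := mul_le_mul_of_nonneg_left h1 (sq_nonneg v)
      _ = ξ := by field_simp
  have hfinal : c*(ρ^2-v^2) ≤ δ := by
    have hηδ : η * (2*ρ*c+1) ≤ δ := by
      have h := min_le_right (ρ/2) (δ/(2*ρ*c+1))
      rw [← hηdef] at h
      exact (le_div_iff₀ h2ρc).1 h
    have s2 : c*(ρ-v) ≤ c*η := mul_le_mul_of_nonneg_left hρv hc0
    have s3 : ρ + v ≤ 2*ρ := by linarith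
    have s4 : c*(ρ-v)*(ρ+v) ≤ c*η*(2*ρ) :=
      mul_le_mul s2 s3 (by linarith) (mul_nonneg hc0 hη0.le)
    nlinarith [hη0.le]
  linarith

lemma psi_rho_nonneg {ξ : ℝ} (hξ : 0 < ξ) :
    0 ≤ ξ / (sInf (Tset ξ)) ^ 2 - Ssum (sInf (Tset ξ)) := by
  have h := Ssum_rho_le hξ
  have hρ0 : 0 < sInf (Tset ξ) := rho_pos hξ
  rw [sub_nonneg, le_div_iff₀ (pow_pos hρ0 2)]
  nlinarith

lemma psi_rho_le {ξ : ℝ} (hξ : 0 < ξ) :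
    ξ / (sInf (Tset ξ))^2 - Ssum (sInf (Tset ξ)) ≤ 2 * Real.exp (-(sInf (Tset ξ))) := by
  set ρ := sInf (Tset ξ) with hρdef
  have hρ0 : 0 < ρ := rho_pos hξ
  have hexp2 : (2:ℝ) ≤ Real.exp ρ := exp_rho_ge_two hξ
  have main : ξ/ρ^2 - Ssum ρ ≤ 1/(Real.exp ρ - 1 + ρ) := by
    refine le_of_forall_pos_le_add fun δ hδ => ?_
    set n := ⌈Real.exp ρ⌉₊ with hndef
    have hn2 : 2 ≤ n := by
      have h1 : 1 < n := Nat.lt_ceil.2 (by push_cast; linarith)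
      omega
    have hn2' : (2:ℝ) ≤ n := by exact_mod_cast hn2
    have hρn : Real.exp ρ ≤ n := Nat.le_ceil _
    have hε₁pos : 0 < Real.log ((n:ℝ)+1) - ρ := by
      have h1 : Real.exp ρ < (n:ℝ)+1 := by linarith
      have h2 := (Real.lt_log_iff_exp_lt (by positivity)).2 h1
      linarith
    have hY : (0:ℝ) < ξ*(2*ρ+1) := mul_pos hξ (by linarith)
    set ε₂ := min 1 (δ*ρ^4/(ξ*(2*ρ+1))) with hε₂def
    have hε₂pos : 0 < ε₂ := lt_min one_pos (div_pos (mul_pos hδ (pow_pos hρ0 4)) hY)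
    have hε₂1 : ε₂ ≤ 1 := min_le_left _ _
    set ε := min (Real.log ((n:ℝ)+1) - ρ) ε₂ with hεdef
    have hε : 0 < ε := lt_min hε₁pos hε₂pos
    obtain ⟨w, hwT, hw⟩ := exists_lt_of_csInf_lt (T_nonempty hξ) (lt_add_of_pos_right ρ hε)
    have hρw : ρ ≤ w := csInf_le T_bdd hwT
    have hw0 : 0 < w := hwT.1
    have hwε₂ : w ≤ ρ + ε₂ := by
      have := min_le_right (Real.log ((n:ℝ)+1) - ρ) ε₂
      rw [← hεdef] at this
      linarith
    have hwε₁ : w < Real.log ((n:ℝ)+1) := by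
      have := min_le_left (Real.log ((n:ℝ)+1) - ρ) ε₂
      rw [← hεdef] at this
      linarith
    have hceilw : ⌈Real.exp w⌉₊ ≤ n + 1 := by
      refine Nat.ceil_le.2 ?_
      have h1 : Real.exp w < Real.exp (Real.log ((n:ℝ)+1)) := Real.exp_lt_exp.2 hwε₁
      rw [Real.exp_log (by positivity)] at h1
      push_cast
      linarith
    have hsub : Aset ρ ⊆ Aset w := Aset_mono hρw
    have hden : (1:ℝ) ≤ Real.exp ρ - 1 + ρ := by linarith
    have hSw : Ssum w ≤ Ssum ρ + 1/(Real.exp ρ - 1 + ρ) := by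
      rw [Ssum, Ssum, ← Finset.sum_sdiff hsub]
      have hsub2 : Aset w \ Aset ρ ⊆ {n} := by
        intro q hq
        rw [Finset.mem_sdiff] at hq
        obtain ⟨hqw, hqρ⟩ := hq
        rw [mem_Aset] at hqw hqρ
        push_neg at hqρ
        have hq1 : q < n + 1 := lt_of_lt_of_le hqw.1 hceilw
        have hq2 : n ≤ q := by
          by_contra hc
          push_neg at hc
          rw [hndef] at hc
          exact hqρ hc hqw.2
        rw [Finset.mem_singleton]
        omega
      have part1 : ∑ q ∈ Aset w \ Aset ρ, 1/((q:ℝ)-1+w) ≤ 1/(Real.exp ρ - 1 + ρ) := by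
        calc ∑ q ∈ Aset w \ Aset ρ, 1/((q:ℝ)-1+w)
            ≤ ∑ q ∈ ({n} : Finset ℕ), 1/((q:ℝ)-1+w) := by
              refine Finset.sum_le_sum_of_subset_of_nonneg hsub2 fun q hq _ => ?_
              rw [Finset.mem_singleton] at hq
              subst hq
              exact one_div_nonneg.2 (denom_pos hn2 hw0).le
          _ = 1/((n:ℝ)-1+w) := Finset.sum_singleton _ _
          _ ≤ 1/(Real.exp ρ - 1 + ρ) :=
              one_div_le_one_div_of_le (by linarith) (by linarith)
      have part2 : ∑ q ∈ Aset ρ, 1/((q:ℝ)-1+w) ≤ ∑ q ∈ Aset ρ, 1/((q:ℝ)-1+ρ) :=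
        Finset.sum_le_sum fun q hq =>
          one_div_le_one_div_of_le (denom_pos (two_le_of_mem hq) hρ0) (by linarith)
      linarith
    have hPw : ξ/w^2 - Ssum w ≤ 0 := hwT.2
    have hterm : ξ/ρ^2 - ξ/w^2 ≤ δ := by
      have hεY : ε₂ * (ξ*(2*ρ+1)) ≤ δ*ρ^4 := by
        have h := min_le_right 1 (δ*ρ^4/(ξ*(2*ρ+1)))
        rw [← hε₂def] at h
        exact (le_div_iff₀ hY).1 h
      have hA : w - ρ ≤ ε₂ := by linarith
      have hB : w + ρ ≤ 2*ρ+1 := by linarith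
      have hC : (w-ρ)*(w+ρ) ≤ ε₂*(2*ρ+1) :=
        mul_le_mul hA hB (by linarith) hε₂pos.le
      have hD : ξ*((w-ρ)*(w+ρ)) ≤ ξ*(ε₂*(2*ρ+1)) :=
        mul_le_mul_of_nonneg_left hC hξ.le
      have hE2 : δ*ρ^4 ≤ δ*(ρ^2*w^2) := by
        have hr2 : ρ^2 ≤ w^2 := by nlinarith
        calc δ*ρ^4 = (δ*ρ^2)*ρ^2 := by ring
          _ ≤ (δ*ρ^2)*w^2 := mul_le_mul_of_nonneg_left hr2 (by positivity)
          _ = δ*(ρ^2*w^2) := by ring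
      rw [div_sub_div _ _ (pow_ne_zero 2 hρ0.ne') (pow_ne_zero 2 hw0.ne'),
        div_le_iff₀ (mul_pos (pow_pos hρ0 2) (pow_pos hw0 2))]
      nlinarith [hD, hεY, hE2]
    linarith
  have h2 : 1/(Real.exp ρ - 1 + ρ) ≤ 2 * Real.exp (-ρ) := by
    have hE : 0 < Real.exp ρ := Real.exp_pos ρ
    have heq : 2 * Real.exp (-ρ) = 2 / Real.exp ρ := by
      rw [Real.exp_neg]; ring
    rw [heq, div_le_div_iff₀ (by linarith) hE]
    linarith
  linarith

end PsiAux

theorem psi_sign_change :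
    (∃ x₁ : ℝ, ∀ x ≥ x₁,
      (∀ v : ℝ, 0 < v → v < rho x → 0 < Psi x v) ∧
      (∀ v : ℝ, rho x < v → Psi x v < 0)) ∧
    ∃ C : ℝ, ∀ x ≥ (3 : ℝ), |Psi x (rho x)| ≤ C * Real.exp (-(rho x)) := by
  have hxi : ∀ x : ℝ, 3 ≤ x → 0 < Real.log (Real.log x) := by
    intro x hx
    have he3 : Real.exp 1 < 3 := by
      have := Real.exp_one_lt_d9; linarith
    have h1 : 1 < Real.log x := by
      have hex : Real.exp 1 < x := lt_of_lt_of_le he3 hx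
      have := Real.log_lt_log (Real.exp_pos 1) hex
      rwa [Real.log_exp] at this
    exact Real.log_pos h1
  constructor
  · refine ⟨3, fun x hx => ?_⟩
    have hξ := hxi x hx
    constructor
    · intro v h0 hv
      rw [PsiAux.rho_eq] at hv
      have := PsiAux.psi_pos hξ h0 hv
      rwa [PsiAux.Psi_eq]
    · intro v hv
      rw [PsiAux.rho_eq] at hv
      have := PsiAux.psi_neg hξ hv
      rwa [PsiAux.Psi_eq]
  · refine ⟨2, fun x hx => ?_⟩
    have hξ := hxi x hx
    rw [PsiAux.Psi_eq, PsiAux.rho_eq,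
      abs_of_nonneg (PsiAux.psi_rho_nonneg hξ)]
    exact PsiAux.psi_rho_le hξ
end

section
/- Fix an integer J ≥ 1. There exist constants C_J and v₀ such that for every integer m ≥ 2 and every real v ≥ v₀: | ∫_v^∞ dt/(t^m log t) − (1/v^{m−1}) Σ_{1 ≤ j ≤ J} (−1)^{j+1} (j−1)! / ((m−1) log v)^j | ≤ C_J / ( v^{m−1} (m log v)^{J+1} ). -/
open Real Filter Finset MeasureTheory

noncomputable def tg (m j : ℕ) (t : ℝ) : ℝ := 1 / (t ^ m * Real.log t ^ j)

lemma tg_nonneg {m j : ℕ} {t : ℝ} (ht : 2 ≤ t) : 0 ≤ tg m j t := by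
  have h1 : (0:ℝ) < t := by linarith
  have h2 : 0 < Real.log t := Real.log_pos (by linarith)
  exact div_nonneg zero_le_one (mul_nonneg (pow_nonneg h1.le _) (pow_nonneg h2.le _))

lemma tg_integrable {m : ℕ} (hm : 2 ≤ m) (j : ℕ) {v : ℝ} (hv : 2 ≤ v) :
    IntegrableOn (tg m j) (Set.Ioi v) := by
  have hv0 : (0:ℝ) < v := by linarith
  have hL2 : (0:ℝ) < Real.log 2 := Real.log_pos (by norm_num)
  have hbound : IntegrableOn (fun t : ℝ => (Real.log 2 ^ j)⁻¹ * t ^ (-2 : ℝ)) (Set.Ioi v) :=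
    (integrableOn_Ioi_rpow_of_lt (by norm_num) hv0).const_mul _
  refine hbound.mono' ?_ ?_
  · apply Measurable.aestronglyMeasurable
    unfold tg
    measurability
  · filter_upwards [ae_restrict_mem measurableSet_Ioi] with t ht
    have ht2 : (2:ℝ) ≤ t := le_trans hv (le_of_lt ht)
    have ht0 : (0:ℝ) < t := by linarith
    have hLt : Real.log 2 ≤ Real.log t := Real.log_le_log (by norm_num) ht2
    have h1 : ‖tg m j t‖ = tg m j t := abs_of_nonneg (tg_nonneg ht2)
    rw [h1]
    have hr : t ^ (-2:ℝ) = (t ^ (2:ℕ))⁻¹ := by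
      rw [show (-2:ℝ) = -((2:ℕ):ℝ) by norm_num, Real.rpow_neg ht0.le, Real.rpow_natCast]
    rw [hr]
    have key : t ^ (2:ℕ) * Real.log 2 ^ j ≤ t ^ m * Real.log t ^ j := by
      apply mul_le_mul (pow_le_pow_right₀ (by linarith) hm)
        (pow_le_pow_left₀ hL2.le hLt j) (by positivity) (by positivity)
    calc tg m j t ≤ 1 / (t ^ (2:ℕ) * Real.log 2 ^ j) := by
          apply one_div_le_one_div_of_le (by positivity) key
      _ = (Real.log 2 ^ j)⁻¹ * (t ^ (2:ℕ))⁻¹ := by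
          rw [one_div, mul_inv, mul_comm]

lemma tg_ibp {n : ℕ} (hn : 1 ≤ n) {v : ℝ} (hv : 2 ≤ v) (j : ℕ) :
    ∫ t in Set.Ioi v, tg (n+1) j t
      = 1 / ((n:ℝ) * v ^ n * Real.log v ^ j)
        - ((j:ℝ) / (n:ℝ)) * ∫ t in Set.Ioi v, tg (n+1) (j+1) t := by
  have hn0 : (0:ℝ) < n := by exact_mod_cast hn
  have hv0 : (0:ℝ) < v := by linarith
  have hLv : 0 < Real.log v := Real.log_pos (by linarith)
  set f : ℝ → ℝ := fun x => -(n:ℝ)⁻¹ * (x ^ n * Real.log x ^ j)⁻¹ with hf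
  have hderiv : ∀ x ∈ Set.Ici v, HasDerivAt f
      (tg (n+1) j x + ((j:ℝ) / (n:ℝ)) * tg (n+1) (j+1) x) x := by
    intro x hx
    have hxv : v ≤ x := hx
    have hx0 : (0:ℝ) < x := by linarith
    have hL : 0 < Real.log x := Real.log_pos (by linarith)
    have hu : HasDerivAt (fun x : ℝ => x ^ n * Real.log x ^ j)
        ((n:ℝ) * x ^ (n-1) * Real.log x ^ j
          + x ^ n * ((j:ℝ) * Real.log x ^ (j-1) * x⁻¹)) x := by
      exact (hasDerivAt_pow n x).mul
        (((hasDerivAt_pow j (Real.log x)).comp x (Real.hasDerivAt_log hx0.ne')))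
    have hune : x ^ n * Real.log x ^ j ≠ 0 := by positivity
    have hinv := (hu.inv hune).const_mul (-(n:ℝ)⁻¹)
    refine hinv.congr_deriv ?_
    obtain ⟨k, rfl⟩ : ∃ k, n = k + 1 := ⟨n - 1, by omega⟩
    unfold tg
    rcases j with _ | i
    · push_cast
      field_simp
      ring
    · push_cast
      field_simp
      ring
  have hlim : Tendsto f atTop (nhds 0) := by
    have h1 : Tendsto (fun x : ℝ => x ^ n * Real.log x ^ j) atTop atTop := by
      apply tendsto_atTop_mono' atTop _ tendsto_id
      filter_upwards [eventually_ge_atTop (Real.exp 1)] with x hx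
      have hx1 : (1:ℝ) ≤ x := le_trans (by nlinarith [Real.add_one_le_exp (1:ℝ)]) hx
      have hlog : (1:ℝ) ≤ Real.log x := by
        rw [show (1:ℝ) = Real.log (Real.exp 1) by simp]
        exact Real.log_le_log (Real.exp_pos 1) hx
      calc (x:ℝ) = x * 1 := by ring
        _ ≤ x ^ n * Real.log x ^ j := by
            exact mul_le_mul (le_self_pow₀ hx1 (by omega)) (one_le_pow₀ hlog) zero_le_one (by positivity)
    have h2 := (h1.inv_tendsto_atTop).const_mul (-(n:ℝ)⁻¹)
    simpa [hf] using h2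
  have hint : IntegrableOn
      (fun x => tg (n+1) j x + ((j:ℝ) / (n:ℝ)) * tg (n+1) (j+1) x) (Set.Ioi v) :=
    (tg_integrable (by omega) j hv).add ((tg_integrable (by omega) (j+1) hv).const_mul _)
  have key := integral_Ioi_of_hasDerivAt_of_tendsto' hderiv hint hlim
  rw [MeasureTheory.integral_add (tg_integrable (by omega) j hv)
    ((tg_integrable (by omega) (j+1) hv).const_mul _), MeasureTheory.integral_const_mul] at key
  have hfv : (0:ℝ) - f v = 1 / ((n:ℝ) * v ^ n * Real.log v ^ j) := by
    rw [hf]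
    field_simp
    ring
  rw [hfv] at key
  linarith

lemma tg_expand {n : ℕ} (hn : 1 ≤ n) {v : ℝ} (hv : 2 ≤ v) (J : ℕ) :
    ∫ t in Set.Ioi v, tg (n+1) 1 t
      = (1 / v ^ n) * ∑ j ∈ Finset.Icc 1 J,
          (-1:ℝ) ^ (j+1) * (Nat.factorial (j-1) : ℝ) / (((n:ℝ)) * Real.log v) ^ j
        + (-1:ℝ) ^ J * (Nat.factorial J : ℝ) / (n:ℝ) ^ J
            * ∫ t in Set.Ioi v, tg (n+1) (J+1) t := by
  have hn0 : (0:ℝ) < n := by exact_mod_cast hn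
  have hv0 : (0:ℝ) < v := by linarith
  have hLv : 0 < Real.log v := Real.log_pos (by linarith)
  induction J with
  | zero => simp [Finset.Icc_eq_empty (by omega : ¬ (1:ℕ) ≤ 0)]
  | succ J ih =>
      rw [Finset.sum_Icc_succ_top (by omega : 1 ≤ J + 1), ih, tg_ibp hn hv (J+1)]
      simp only [Nat.add_sub_cancel, Nat.factorial_succ]
      push_cast
      field_simp
      ring

lemma tg_tail_bound {n : ℕ} (hn : 1 ≤ n) {v : ℝ} (hv : 2 ≤ v) (J : ℕ) :
    ∫ t in Set.Ioi v, tg (n+1) (J+1) t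
      ≤ (Real.log v ^ (J+1))⁻¹ * (1 / ((n:ℝ) * v ^ n)) := by
  have hn0 : (0:ℝ) < n := by exact_mod_cast hn
  have hv0 : (0:ℝ) < v := by linarith
  have hLv : 0 < Real.log v := Real.log_pos (by linarith)
  have h0 : ∫ t in Set.Ioi v, tg (n+1) 0 t = 1 / ((n:ℝ) * v ^ n) := by
    have := tg_ibp hn hv 0
    simpa using this
  have hmono : ∫ t in Set.Ioi v, tg (n+1) (J+1) t
      ≤ ∫ t in Set.Ioi v, (Real.log v ^ (J+1))⁻¹ * tg (n+1) 0 t := by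
    apply MeasureTheory.setIntegral_mono_on (tg_integrable (by omega) (J+1) hv)
      ((tg_integrable (by omega) 0 hv).const_mul _) measurableSet_Ioi
    intro t ht
    have htv : v < t := ht
    have ht2 : (2:ℝ) ≤ t := by linarith
    have ht0 : (0:ℝ) < t := by linarith
    have hLt : Real.log v ≤ Real.log t := Real.log_le_log hv0 htv.le
    unfold tg
    rw [pow_zero, mul_one]
    calc 1 / (t ^ (n+1) * Real.log t ^ (J+1))
        ≤ 1 / (t ^ (n+1) * Real.log v ^ (J+1)) := by
          apply one_div_le_one_div_of_le (by positivity)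
          exact mul_le_mul_of_nonneg_left (pow_le_pow_left₀ hLv.le hLt _) (by positivity)
      _ = (Real.log v ^ (J+1))⁻¹ * (1 / t ^ (n+1)) := by
          rw [one_div, mul_inv, one_div, mul_comm]
  rw [MeasureTheory.integral_const_mul, h0] at hmono
  exact hmono

theorem integral_tail_asymptotic_expansion (J : ℕ) (hJ : 1 ≤ J) :
    ∃ C : ℝ, ∃ v₀ : ℝ, ∀ m : ℕ, 2 ≤ m → ∀ v ≥ v₀,
      |(∫ t in Set.Ioi v, 1 / (t ^ m * Real.log t)) -
          (1 / v ^ (m - 1)) *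
            ∑ j ∈ Finset.Icc 1 J,
              (-1 : ℝ) ^ (j + 1) * (Nat.factorial (j - 1) : ℝ) /
                ((((m : ℝ) - 1) * Real.log v) ^ j)| ≤
        C / (v ^ (m - 1) * ((m : ℝ) * Real.log v) ^ (J + 1)) := by
  refine ⟨(Nat.factorial J : ℝ) * 2 ^ (J+1), 2, ?_⟩
  intro m hm v hv
  obtain ⟨n, rfl⟩ : ∃ n, m = n + 1 := ⟨m - 1, by omega⟩
  have hn : 1 ≤ n := by omega
  have hn0 : (0:ℝ) < n := by exact_mod_cast hn
  have hv0 : (0:ℝ) < v := by linarith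
  have hLv : 0 < Real.log v := Real.log_pos (by linarith)
  have hcast : ((n+1:ℕ):ℝ) - 1 = (n:ℝ) := by push_cast; ring
  have hsub : (n + 1) - 1 = n := by omega
  have hI : (∫ t in Set.Ioi v, 1 / (t ^ (n+1) * Real.log t))
      = ∫ t in Set.Ioi v, tg (n+1) 1 t := by
    apply MeasureTheory.setIntegral_congr_fun measurableSet_Ioi
    intro t _
    simp [tg]
  rw [hI, hsub, hcast, tg_expand hn hv J]
  rw [add_sub_cancel_left, abs_mul, abs_div, abs_mul, abs_pow, abs_neg, abs_one, one_pow,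
    one_mul]
  have hItail : 0 ≤ ∫ t in Set.Ioi v, tg (n+1) (J+1) t :=
    MeasureTheory.setIntegral_nonneg measurableSet_Ioi
      (fun t ht => tg_nonneg (by exact le_trans hv (le_of_lt ht)))
  rw [abs_of_nonneg (by positivity : (0:ℝ) ≤ (Nat.factorial J : ℝ)),
    abs_of_nonneg (by positivity : (0:ℝ) ≤ (n:ℝ) ^ J), abs_of_nonneg hItail]
  have hbd := tg_tail_bound hn hv J
  calc (Nat.factorial J : ℝ) / (n:ℝ) ^ J * ∫ t in Set.Ioi v, tg (n+1) (J+1) t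
      ≤ (Nat.factorial J : ℝ) / (n:ℝ) ^ J
          * ((Real.log v ^ (J+1))⁻¹ * (1 / ((n:ℝ) * v ^ n))) := by
        apply mul_le_mul_of_nonneg_left hbd (by positivity)
    _ = (Nat.factorial J : ℝ) * 2 ^ (J+1)
          / (v ^ n * (2 * ((n:ℝ)) * Real.log v) ^ (J+1)) := by
        rw [mul_pow, mul_pow]
        field_simp
        ring
    _ ≤ (Nat.factorial J : ℝ) * 2 ^ (J+1)
          / (v ^ n * ((((n:ℕ)+1:ℝ)) * Real.log v) ^ (J+1)) := by
        apply div_le_div_of_nonneg_left (by positivity) (by positivity)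
        apply mul_le_mul_of_nonneg_left _ (by positivity)
        apply pow_le_pow_left₀ (by positivity)
        have h1n : (1:ℝ) ≤ n := by exact_mod_cast hn
        have h2 : ((n:ℝ) + 1) ≤ 2 * n := by linarith
        nlinarith
    _ = (Nat.factorial J : ℝ) * 2 ^ (J+1)
          / (v ^ n * ((((n+1:ℕ):ℝ)) * Real.log v) ^ (J+1)) := by push_cast; ring
end

section
/- Fix an integer J ≥ 1. There exist constants C_J and v₀ such that for every integer n ≥ 0 and every real v ≥ v₀: ∫_2^v t^n dt/log t = Σ_{1 ≤ j ≤ J} v^{n+1} (j−1)! / ((n+1) log v)^j − (2^{n+1}/(n+1)) · (1/log 2 + θ_1 C_J/(n+1)) + θ_2 C_J v^{n+1} / ((n+1) log v)^{J+1} for some reals θ_1, θ_2 with |θ_1| ≤ 1, |θ_2| ≤ 1. -/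
open Real Filter Finset MeasureTheory


lemma contOn_invlogpow (k : ℕ) {a b : ℝ} (ha : 2 ≤ a) :
    ContinuousOn (fun u : ℝ => 1 / (Real.log u) ^ k) (Set.Icc a b) := by
  apply ContinuousOn.div continuousOn_const
  · exact (Real.continuousOn_log.mono (by
      intro u hu; simp only [Set.mem_compl_iff, Set.mem_singleton_iff]
      nlinarith [hu.1])).pow k
  · intro u hu
    have h2 : (0:ℝ) < Real.log u := Real.log_pos (by linarith [hu.1])
    positivity

lemma integrable_invlogpow (k : ℕ) {a b : ℝ} (ha : 2 ≤ a) (hab : a ≤ b) :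
    IntervalIntegrable (fun u : ℝ => 1 / (Real.log u) ^ k) volume a b := by
  apply ContinuousOn.intervalIntegrable
  rw [Set.uIcc_of_le hab]
  exact contOn_invlogpow k ha

lemma hasDeriv_div_logpow (k : ℕ) (hk : 1 ≤ k) {u : ℝ} (hu : 2 ≤ u) :
    HasDerivAt (fun u : ℝ => u / (Real.log u) ^ k)
      (1 / (Real.log u) ^ k - k / (Real.log u) ^ (k + 1)) u := by
  have hu0 : u ≠ 0 := by linarith
  have hlog : (0:ℝ) < Real.log u := Real.log_pos (by linarith)
  have hne : (Real.log u) ^ k ≠ 0 := by positivity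
  have h := (hasDerivAt_id u).div ((Real.hasDerivAt_log hu0).pow k) hne
  convert h using 1
  · rfl
  · rfl
  · rfl
  obtain ⟨m, rfl⟩ := Nat.exists_eq_add_of_le hk
  simp only [id, Pi.pow_apply, Nat.add_sub_cancel_left]
  field_simp
  ring

lemma ibp_step (k : ℕ) (hk : 1 ≤ k) {a x : ℝ} (ha : 2 ≤ a) (hx : a ≤ x) :
    (∫ u in a..x, 1 / (Real.log u) ^ k) =
      x / (Real.log x) ^ k - a / (Real.log a) ^ k
        + k * ∫ u in a..x, 1 / (Real.log u) ^ (k + 1) := by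
  have key : (∫ u in a..x, (1 / (Real.log u) ^ k - k * (1 / (Real.log u) ^ (k + 1)))) =
      x / (Real.log x) ^ k - a / (Real.log a) ^ k := by
    apply intervalIntegral.integral_eq_sub_of_hasDerivAt
    · intro u hu
      rw [Set.uIcc_of_le hx] at hu
      have := hasDeriv_div_logpow k hk (le_trans ha hu.1)
      convert this using 1
      · rfl
      · rfl
      rw [mul_one_div]
    · exact ((integrable_invlogpow k ha hx).sub
        ((integrable_invlogpow (k+1) ha hx).const_mul k))
  rw [intervalIntegral.integral_sub (integrable_invlogpow k ha hx)
      ((integrable_invlogpow (k+1) ha hx).const_mul k),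
    intervalIntegral.integral_const_mul] at key
  linarith

lemma expansion (K : ℕ) (hK : 1 ≤ K) {a x : ℝ} (ha : 2 ≤ a) (hx : a ≤ x) :
    (∫ u in a..x, 1 / Real.log u) =
      (∑ j ∈ Finset.Icc 1 K, (Nat.factorial (j-1) : ℝ) *
          (x / (Real.log x) ^ j - a / (Real.log a) ^ j))
        + (Nat.factorial K : ℝ) * ∫ u in a..x, 1 / (Real.log u) ^ (K + 1) := by
  induction K, hK using Nat.le_induction with
  | base =>
    have h := ibp_step 1 le_rfl ha hx
    simp only [Finset.Icc_self, Finset.sum_singleton] at *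
    norm_num at h ⊢
    linarith
  | succ K hK ih =>
    rw [ih, ibp_step (K+1) (by omega) ha hx, Finset.sum_Icc_succ_top (by omega)]
    have : (K+1-1) = K := by omega
    rw [this]
    push_cast [Nat.factorial_succ]
    ring

lemma int_nonneg (K : ℕ) {a b : ℝ} (ha : 2 ≤ a) (hab : a ≤ b) :
    0 ≤ ∫ u in a..b, 1 / (Real.log u) ^ K := by
  apply intervalIntegral.integral_nonneg hab
  intro u hu
  have : (0:ℝ) < Real.log u := Real.log_pos (by linarith [hu.1])
  positivity

lemma int_le_const (K : ℕ) {a b : ℝ} (ha : 2 ≤ a) (hab : a ≤ b) :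
    (∫ u in a..b, 1 / (Real.log u) ^ K) ≤ (b - a) * (1 / (Real.log a) ^ K) := by
  have h := intervalIntegral.integral_mono_on hab (integrable_invlogpow K ha hab)
    (intervalIntegrable_const (c := 1 / (Real.log a) ^ K))
    (fun u hu => by
      have h1 : (0:ℝ) < Real.log a := Real.log_pos (by linarith)
      have h2 : Real.log a ≤ Real.log u := Real.log_le_log (by linarith) hu.1
      apply one_div_le_one_div_of_le (by positivity)
      exact pow_le_pow_left₀ h1.le h2 K)
  simpa using h

lemma remainder_bound (K : ℕ) {a x : ℝ} (ha : 2 ≤ a) (hax : a ≤ Real.sqrt x) (hx : 4 ≤ x)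
    (hlog : (Real.log x) ^ K ≤ (Real.log 2) ^ K * Real.sqrt x) :
    (∫ u in a..x, 1 / (Real.log u) ^ K) ≤ (1 + 2 ^ K) * x / (Real.log x) ^ K := by
  set s := Real.sqrt x with hs
  have hx0 : (0:ℝ) ≤ x := by linarith
  have hs2 : s * s = x := Real.mul_self_sqrt hx0
  have h2s : 2 ≤ s := le_trans ha hax
  have hsx : s ≤ x := by nlinarith
  have hlogx : (0:ℝ) < Real.log x := Real.log_pos (by linarith)
  have hlog2 : (0:ℝ) < Real.log 2 := Real.log_pos (by norm_num)
  have hsplit : (∫ u in a..x, 1 / (Real.log u) ^ K)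
      = (∫ u in a..s, 1 / (Real.log u) ^ K) + ∫ u in s..x, 1 / (Real.log u) ^ K :=
    (intervalIntegral.integral_add_adjacent_intervals
      (integrable_invlogpow K ha hax) (integrable_invlogpow K h2s hsx)).symm
  have h1 : (∫ u in a..s, 1 / (Real.log u) ^ K) ≤ x / (Real.log x) ^ K := by
    have := int_le_const K ha hax
    have hlogale : (1:ℝ) / (Real.log a) ^ K ≤ 1 / (Real.log 2) ^ K := by
      have h2 : Real.log 2 ≤ Real.log a := Real.log_le_log (by norm_num) ha
      apply one_div_le_one_div_of_le (by positivity)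
      exact pow_le_pow_left₀ hlog2.le h2 K
    have hstep : (s - a) * (1 / (Real.log a) ^ K) ≤ s * (1 / (Real.log 2) ^ K) := by
      have hsa : (0:ℝ) ≤ s - a := by linarith
      calc (s - a) * (1 / (Real.log a) ^ K) ≤ (s - a) * (1 / (Real.log 2) ^ K) := by
            apply mul_le_mul_of_nonneg_left hlogale hsa
        _ ≤ s * (1 / (Real.log 2) ^ K) := by
            apply mul_le_mul_of_nonneg_right (by linarith) (by positivity)
    have hfin : s * (1 / (Real.log 2) ^ K) ≤ x / (Real.log x) ^ K := by
      rw [mul_one_div, div_le_div_iff₀ (by positivity) (by positivity)]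
      have hk1 : s * (Real.log x) ^ K ≤ Real.log 2 ^ K * x := by
        calc s * (Real.log x) ^ K ≤ s * (Real.log 2 ^ K * s) :=
              mul_le_mul_of_nonneg_left hlog (Real.sqrt_nonneg x)
          _ = Real.log 2 ^ K * (s * s) := by ring
          _ = Real.log 2 ^ K * x := by rw [hs2]
      linarith
    linarith
  have h2 : (∫ u in s..x, 1 / (Real.log u) ^ K) ≤ 2 ^ K * x / (Real.log x) ^ K := by
    have := int_le_const K h2s hsx
    have hlogs : Real.log s = Real.log x / 2 := Real.log_sqrt hx0
    have hstep : (x - s) * (1 / (Real.log s) ^ K) ≤ 2 ^ K * x / (Real.log x) ^ K := by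
      rw [hlogs, div_pow, one_div_div]
      have e : (x - s) * ((2:ℝ) ^ K / (Real.log x) ^ K) = (x - s) * 2 ^ K / (Real.log x) ^ K := by
        ring
      rw [e, div_le_div_iff₀ (by positivity : (0:ℝ) < (Real.log x)^K) (by positivity : (0:ℝ) < (Real.log x)^K)]
      have h2k : (0:ℝ) < (2:ℝ)^K := by positivity
      have hh : (x - s) * ((2:ℝ) ^ K * (Real.log x) ^ K) ≤ x * ((2:ℝ) ^ K * (Real.log x) ^ K) :=
        mul_le_mul_of_nonneg_right (by linarith [Real.sqrt_nonneg x]) (by positivity)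
      nlinarith [hh]
    linarith
  rw [hsplit]
  have : (1 + 2 ^ K) * x / (Real.log x) ^ K = x / (Real.log x)^K + 2^K * x/(Real.log x)^K := by
    ring
  linarith

lemma contOn_invlog : ContinuousOn (fun u : ℝ => 1 / Real.log u) {u : ℝ | 2 ≤ u} := by
  apply ContinuousOn.div continuousOn_const
  · exact Real.continuousOn_log.mono (by
      intro u hu; simp only [Set.mem_compl_iff, Set.mem_singleton_iff, Set.mem_setOf_eq] at *
      nlinarith)
  · intro u hu
    simp only [Set.mem_setOf_eq] at hu
    have : (0:ℝ) < Real.log u := Real.log_pos (by linarith)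
    positivity

lemma subst_pow (n : ℕ) {v : ℝ} (hv : 2 ≤ v) :
    (∫ t in (2:ℝ)..v, t ^ n / Real.log t)
      = ∫ u in (2:ℝ)^(n+1)..v^(n+1), 1 / Real.log u := by
  have key := intervalIntegral.integral_comp_smul_deriv'
    (f := fun t : ℝ => t ^ (n+1)) (f' := fun t : ℝ => ((n:ℝ)+1) * t ^ n)
    (g := fun u : ℝ => 1 / Real.log u) (a := (2:ℝ)) (b := v)
    (fun t _ => by simpa using hasDerivAt_pow (n+1) t)
    (by fun_prop)
    (contOn_invlog.mono (by
      intro u hu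
      obtain ⟨t, ht, rfl⟩ := hu
      rw [Set.uIcc_of_le hv] at ht
      simp only [Set.mem_setOf_eq]
      calc (2:ℝ) ≤ 2 ^ (n+1) := by
            calc (2:ℝ) = 2 ^ 1 := (pow_one 2).symm
              _ ≤ 2 ^ (n+1) := pow_le_pow_right₀ (by norm_num) (by omega)
        _ ≤ t ^ (n+1) := pow_le_pow_left₀ (by norm_num) ht.1 (n+1)))
  rw [← key]
  apply intervalIntegral.integral_congr
  intro t ht
  rw [Set.uIcc_of_le hv] at ht
  have hlt : (0:ℝ) < Real.log t := Real.log_pos (by linarith [ht.1])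
  have ht0 : (0:ℝ) < t := by linarith [ht.1]
  simp only [smul_eq_mul, Function.comp]
  rw [Real.log_pow]
  push_cast
  field_simp

lemma exists_v0 (K : ℕ) (hK : 1 ≤ K) :
    ∃ v₀ : ℝ, 4 ≤ v₀ ∧ ∀ x ≥ v₀, (Real.log x) ^ K ≤ (Real.log 2) ^ K * Real.sqrt x := by
  have hlog2 : (0:ℝ) < Real.log 2 := Real.log_pos (by norm_num)
  set c : ℝ := (Real.log 2) ^ K with hc
  have hc0 : 0 < c := by positivity
  set M : ℝ := (4 * K) ^ K with hM
  have hM0 : 0 < M := by positivity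
  refine ⟨max 4 ((M / c) ^ (4:ℕ) + 1), le_max_left _ _, ?_⟩
  intro x hx
  have hx4 : (4:ℝ) ≤ x := le_trans (le_max_left _ _) hx
  have hx1 : (1:ℝ) ≤ x := by linarith
  have hx0 : (0:ℝ) < x := by linarith
  -- step 1 : (log x)^K ≤ M * x ^ (1/4 : ℝ)
  have hε : (0:ℝ) < 1 / (4 * K) := by positivity
  have h1 : Real.log x ≤ 4 * K * x ^ ((1:ℝ) / (4 * K)) := by
    have := Real.log_le_rpow_div hx0.le hε
    rw [div_div_eq_mul_div, div_one] at this
    linarith [this]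
  have hlogx0 : 0 ≤ Real.log x := Real.log_nonneg hx1
  have h2 : (Real.log x) ^ K ≤ M * x ^ ((1:ℝ) / 4) := by
    calc (Real.log x) ^ K ≤ (4 * K * x ^ ((1:ℝ) / (4 * K))) ^ K :=
          pow_le_pow_left₀ hlogx0 h1 K
      _ = M * (x ^ ((1:ℝ) / (4 * K))) ^ K := by rw [mul_pow, hM]
      _ = M * x ^ ((1:ℝ) / 4) := by
          rw [← Real.rpow_natCast (x ^ ((1:ℝ) / (4 * K))) K, ← Real.rpow_mul hx0.le]
          congr 2
          have : (K:ℝ) ≠ 0 := by positivity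
          field_simp
  -- step 2 : M * x^(1/4) ≤ c * sqrt x
  have hq : M / c ≤ x ^ ((1:ℝ) / 4) := by
    have hxx : (M / c) ^ (4:ℕ) ≤ x := by
      have := le_trans (le_max_right 4 ((M / c) ^ (4:ℕ) + 1)) hx
      linarith
    calc M / c = ((M / c) ^ (4:ℕ)) ^ ((1:ℝ)/4) := by
          rw [← Real.rpow_natCast (M / c) 4, ← Real.rpow_mul (by positivity)]
          norm_num
      _ ≤ x ^ ((1:ℝ)/4) := Real.rpow_le_rpow (by positivity) hxx (by norm_num)
  have hsq : Real.sqrt x = x ^ ((1:ℝ)/4) * x ^ ((1:ℝ)/4) := by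
    rw [← Real.rpow_add hx0, Real.sqrt_eq_rpow]
    norm_num
  have hx14 : 0 ≤ x ^ ((1:ℝ)/4) := Real.rpow_nonneg hx0.le _
  calc (Real.log x) ^ K ≤ M * x ^ ((1:ℝ) / 4) := h2
    _ ≤ (c * x ^ ((1:ℝ)/4)) * x ^ ((1:ℝ)/4) := by
        have : M ≤ c * x ^ ((1:ℝ)/4) := by
          rw [div_le_iff₀ hc0] at hq; linarith [hq]
        nlinarith [this, hx14]
    _ = c * Real.sqrt x := by rw [hsq]; ring

lemma alg_e2 (r p c y : ℝ) (hp : p ≠ 0) (hc : c ≠ 0) (hy : y ≠ 0) :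
    r * p / (c * y) * c * y / p = r := by
  field_simp

lemma alg_e1 (av nv l t c : ℝ) (hn : nv ≠ 0) (hl : l ≠ 0) (ha : av ≠ 0) (hc : c ≠ 0) :
    av / nv * (1 / l + t * nv ^ 2 / (av * c) * c / nv) = av / (nv * l) + t := by
  field_simp

theorem integral_power_over_log_asymptotic_expansion (J : ℕ) (hJ : 1 ≤ J) :
    ∃ C : ℝ, 0 < C ∧ ∃ v₀ : ℝ, ∀ n : ℕ, ∀ v ≥ v₀,
      ∃ θ₁ θ₂ : ℝ, |θ₁| ≤ 1 ∧ |θ₂| ≤ 1 ∧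
        (∫ t in (2 : ℝ)..v, t ^ n / Real.log t) =
          (∑ j ∈ Finset.Icc 1 J,
              v ^ (n + 1) * (Nat.factorial (j - 1) : ℝ) /
                (((n : ℝ) + 1) * Real.log v) ^ j) -
            (2 ^ (n + 1) / ((n : ℝ) + 1)) * (1 / Real.log 2 + θ₁ * C / ((n : ℝ) + 1)) +
            θ₂ * C * v ^ (n + 1) / (((n : ℝ) + 1) * Real.log v) ^ (J + 1) := by
  have hlog2 : (0:ℝ) < Real.log 2 := Real.log_pos (by norm_num)
  set C₁ : ℝ := ∑ j ∈ Finset.Ioc 1 J, (Nat.factorial (j-1) : ℝ) / (Real.log 2) ^ j with hC₁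
  have hC₁0 : 0 ≤ C₁ := Finset.sum_nonneg (fun j _ => by positivity)
  set C₂ : ℝ := (Nat.factorial J : ℝ) * (1 + 2 ^ (J+1)) with hC₂
  have hC₂0 : 0 ≤ C₂ := by positivity
  set C : ℝ := C₁ + C₂ + 1 with hC
  have hC0 : 0 < C := by positivity
  refine ⟨C, hC0, ?_⟩
  obtain ⟨v₀, hv₀4, hv₀⟩ := exists_v0 (J+1) (by omega)
  refine ⟨v₀, ?_⟩
  intro n v hv
  have hv4 : (4:ℝ) ≤ v := le_trans hv₀4 hv
  have hv2 : (2:ℝ) ≤ v := by linarith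
  have hv1 : (1:ℝ) ≤ v := by linarith
  set N : ℝ := (n:ℝ) + 1 with hN
  have hN1 : (1:ℝ) ≤ N := by rw [hN]; have : (0:ℝ) ≤ (n:ℝ) := Nat.cast_nonneg n; linarith
  have hN0 : (0:ℝ) < N := by linarith
  set a : ℝ := (2:ℝ) ^ (n+1) with ha
  set x : ℝ := v ^ (n+1) with hx
  have ha2 : (2:ℝ) ≤ a := by
    calc (2:ℝ) = 2 ^ 1 := (pow_one 2).symm
      _ ≤ 2 ^ (n+1) := pow_le_pow_right₀ (by norm_num) (by omega)
  have ha0 : (0:ℝ) < a := by linarith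
  have hvx : v ≤ x := le_self_pow₀ hv1 (by omega)
  have hx4 : (4:ℝ) ≤ x := by linarith
  have hax : a ≤ x := pow_le_pow_left₀ (by norm_num) hv2 (n+1)
  have hx0 : (0:ℝ) < x := by linarith
  have ha_sqrt : a ≤ Real.sqrt x := by
    rw [Real.le_sqrt ha0.le hx0.le]
    calc a ^ 2 = (4:ℝ) ^ (n+1) := by rw [ha, ← pow_mul, mul_comm, pow_mul]; norm_num
      _ ≤ v ^ (n+1) := pow_le_pow_left₀ (by norm_num) hv4 (n+1)
  have hlogv : (0:ℝ) < Real.log v := Real.log_pos (by linarith)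
  have hlogx : Real.log x = N * Real.log v := by
    rw [hx, Real.log_pow]; push_cast [hN]; ring
  have hloga : Real.log a = N * Real.log 2 := by
    rw [ha, Real.log_pow]; push_cast [hN]; ring
  have hlogx0 : (0:ℝ) < Real.log x := by rw [hlogx]; positivity
  -- expansion
  have hexp := expansion J hJ ha2 hax
  have hsubst := subst_pow n hv2
  have hpow1 : (∫ u in a..x, 1 / Real.log u) = ∫ u in a..x, 1 / (Real.log u) ^ 1 := by
    simp [pow_one]
  set Rint : ℝ := ∫ u in a..x, 1 / (Real.log u) ^ (J+1) with hRint
  have hRint0 : 0 ≤ Rint := int_nonneg (J+1) ha2 hax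
  have hRintle : Rint ≤ (1 + 2 ^ (J+1)) * x / (Real.log x) ^ (J+1) :=
    remainder_bound (J+1) ha2 ha_sqrt hx4 (hv₀ x (by linarith))
  set R : ℝ := (Nat.factorial J : ℝ) * Rint with hR
  have hR0 : 0 ≤ R := mul_nonneg (by positivity) hRint0
  set B : ℝ := ∑ j ∈ Finset.Icc 1 J,
      (Nat.factorial (j-1) : ℝ) * a / (N * Real.log 2) ^ j with hB
  set S : ℝ := ∑ j ∈ Finset.Icc 1 J,
      x * (Nat.factorial (j-1) : ℝ) / (N * Real.log v) ^ j with hS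
  have hI : (∫ t in (2:ℝ)..v, t ^ n / Real.log t) = S - B + R := by
    rw [hsubst, ← ha, ← hx, hexp, hlogx, hloga]
    rw [hS, hB, ← Finset.sum_sub_distrib]
    congr 1
    apply Finset.sum_congr rfl
    intro j hj
    field_simp
  -- theta definitions
  set T : ℝ := ∑ j ∈ Finset.Ioc 1 J,
      (Nat.factorial (j-1) : ℝ) * a / (N * Real.log 2) ^ j with hT
  have hBT : B = a / (N * Real.log 2) + T := by
    rw [hB, Finset.Icc_eq_cons_Ioc hJ, Finset.sum_cons]
    norm_num
    rfl
  have hT0 : 0 ≤ T := Finset.sum_nonneg (fun j _ => by positivity)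
  refine ⟨T * N ^ 2 / (a * C), R * (N * Real.log v) ^ (J+1) / (C * x), ?_, ?_, ?_⟩
  · -- |θ₁| ≤ 1
    rw [abs_of_nonneg (div_nonneg (mul_nonneg hT0 (by positivity)) (by positivity)),
      div_le_one (by positivity)]
    have hterm : T * N ^ 2 ≤ a * C₁ := by
      rw [hT, Finset.sum_mul, hC₁, Finset.mul_sum]
      apply Finset.sum_le_sum
      intro j hj
      have hj2 : 2 ≤ j := (Finset.mem_Ioc.mp hj).1
      have hNj : N ^ 2 ≤ N ^ j := pow_le_pow_right₀ hN1 hj2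
      rw [mul_pow, div_mul_eq_mul_div,
        div_le_iff₀ (by positivity : (0:ℝ) < N ^ j * Real.log 2 ^ j)]
      have hrhs : a * ((Nat.factorial (j-1) : ℝ) / Real.log 2 ^ j) * (N ^ j * Real.log 2 ^ j)
          = (Nat.factorial (j-1) : ℝ) * a * N ^ j := by
        field_simp
      rw [hrhs]
      have hfa : (0:ℝ) ≤ (Nat.factorial (j-1) : ℝ) * a := by positivity
      calc (Nat.factorial (j-1) : ℝ) * a * N ^ 2
          ≤ (Nat.factorial (j-1) : ℝ) * a * N ^ j := mul_le_mul_of_nonneg_left hNj hfa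
        _ = _ := rfl
    have : a * C₁ ≤ a * C := by
      apply mul_le_mul_of_nonneg_left _ ha0.le
      rw [hC]; linarith
    linarith
  · -- |θ₂| ≤ 1
    have hNlv : (0:ℝ) < (N * Real.log v) ^ (J+1) := pow_pos (mul_pos hN0 hlogv) _
    rw [abs_of_nonneg (div_nonneg (mul_nonneg hR0 hNlv.le) (mul_pos hC0 hx0).le),
      div_le_one (mul_pos hC0 hx0)]
    have h1 : R * (N * Real.log v) ^ (J+1) ≤ C₂ * x := by
      rw [← hlogx, hR]
      have := mul_le_mul_of_nonneg_left hRintle (by positivity : (0:ℝ) ≤ (Nat.factorial J : ℝ))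
      calc (Nat.factorial J : ℝ) * Rint * Real.log x ^ (J+1)
          ≤ (Nat.factorial J : ℝ) * ((1 + 2 ^ (J+1)) * x / (Real.log x) ^ (J+1))
              * Real.log x ^ (J+1) := by
            exact mul_le_mul_of_nonneg_right this (pow_nonneg hlogx0.le _)
        _ = C₂ * x := by
            rw [hC₂, mul_assoc, div_mul_cancel₀ _ (ne_of_gt (pow_pos hlogx0 (J+1)))]
            ring
    have h2 : C₂ * x ≤ C * x := by
      apply mul_le_mul_of_nonneg_right _ hx0.le
      rw [hC]; linarith
    linarith
  · -- equality
    rw [hI]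
    have hNlv : ((N * Real.log v) ^ (J+1)) ≠ 0 := ne_of_gt (pow_pos (mul_pos hN0 hlogv) _)
    have e2 : R * (N * Real.log v) ^ (J+1) / (C * x) * C * x / (N * Real.log v) ^ (J+1) = R :=
      alg_e2 R _ C x hNlv (ne_of_gt hC0) (ne_of_gt hx0)
    have e1 : a / N * (1 / Real.log 2 + T * N ^ 2 / (a * C) * C / N) = B := by
      rw [hBT]
      exact alg_e1 a N (Real.log 2) T C (ne_of_gt hN0) (ne_of_gt hlog2)
        (ne_of_gt ha0) (ne_of_gt hC0)
    calc S - B + R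
        = S - a / N * (1 / Real.log 2 + T * N ^ 2 / (a * C) * C / N)
          + R * (N * Real.log v) ^ (J+1) / (C * x) * C * x / (N * Real.log v) ^ (J+1) := by
          rw [e1, e2]
      _ = _ := by rw [hS]
end

section
/- Let 0 < ε < 1 and C > 0. There exist constants C' and x₁ (depending on ε and C) such that for all x ≥ x₁ and all h > −1 + ε with |log(1+h)| ≤ C · √(log₂ x)/(log₃ x)^{3/2}, one has | ρ_{x^{1+h}} − ρ_x | ≤ C' / (log₃ x)². -/
set_option maxRecDepth 10000

open Real Filter Finset

noncomputable def Sfun (v : ℝ) : ℝ :=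
  ∑ q ∈ (Finset.range ⌈Real.exp v⌉₊).filter Nat.Prime, 1 / ((q : ℝ) - 1 + v)

noncomputable def Gfun (v : ℝ) : ℝ := v ^ 2 * Sfun v

def Mset (ξ : ℝ) : Set ℝ := {v | 0 < v ∧ ξ ≤ Gfun v}

noncomputable def rhoXi (ξ : ℝ) : ℝ := sInf (Mset ξ)

lemma Psi_le_iff {x v : ℝ} (hv : 0 < v) : Psi x v ≤ 0 ↔ Real.log (Real.log x) ≤ Gfun v := by
  have hv2 : (0:ℝ) < v ^ 2 := by positivity
  rw [Psi, Gfun, sub_nonpos, div_le_iff₀ hv2]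
  rw [mul_comm]
  rfl

lemma rho_eq_rhoXi (x : ℝ) : rho x = rhoXi (Real.log (Real.log x)) := by
  unfold rho rhoXi Mset
  congr 1
  ext v
  simp only [Set.mem_setOf_eq]
  constructor
  · rintro ⟨h1, h2⟩; exact ⟨h1, (Psi_le_iff h1).1 h2⟩
  · rintro ⟨h1, h2⟩; exact ⟨h1, (Psi_le_iff h1).2 h2⟩

lemma Mset_bddBelow (ξ : ℝ) : BddBelow (Mset ξ) := ⟨0, fun v hv => hv.1.le⟩

lemma rhoXi_nonneg (ξ : ℝ) : 0 ≤ rhoXi ξ :=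
  Real.sInf_nonneg (fun v hv => hv.1.le)

lemma denom_pos {q : ℕ} (hq : q.Prime) {v : ℝ} (hv : 0 < v) : 0 < (q : ℝ) - 1 + v := by
  have : (2:ℝ) ≤ q := by exact_mod_cast hq.two_le
  linarith

lemma Gfun_growth {v w : ℝ} (hv : 0 < v) (hvw : v ≤ w) : (w / v) * Gfun v ≤ Gfun w := by
  have hw : 0 < w := lt_of_lt_of_le hv hvw
  have hsub : (Finset.range ⌈Real.exp v⌉₊).filter Nat.Prime ⊆
      (Finset.range ⌈Real.exp w⌉₊).filter Nat.Prime :=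
    Finset.filter_subset_filter _ (Finset.range_subset_range.2 (Nat.ceil_le_ceil (Real.exp_le_exp.2 hvw)))
  have h1 : (w / v) * Gfun v = ∑ q ∈ (Finset.range ⌈Real.exp v⌉₊).filter Nat.Prime,
      (w * v) / ((q : ℝ) - 1 + v) := by
    rw [Gfun, Sfun, Finset.mul_sum, Finset.mul_sum]
    refine Finset.sum_congr rfl fun q hq => ?_
    have hqp := (Finset.mem_filter.1 hq).2
    have d1 : ((q : ℝ) - 1 + v) ≠ 0 := (denom_pos hqp hv).ne'
    field_simp
  rw [h1, Gfun, Sfun, Finset.mul_sum]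
  refine le_trans (Finset.sum_le_sum fun q hq => ?_)
    (Finset.sum_le_sum_of_subset_of_nonneg hsub fun q hq _ => ?_)
  · have hqp := (Finset.mem_filter.1 hq).2
    have h2 : (2:ℝ) ≤ q := by exact_mod_cast hqp.two_le
    have d1 : 0 < (q : ℝ) - 1 + v := by linarith
    have d2 : 0 < (q : ℝ) - 1 + w := by linarith
    rw [div_le_iff₀ d1]
    have : w ^ 2 * (1 / ((q:ℝ) - 1 + w)) = w ^ 2 / ((q:ℝ) - 1 + w) := by ring
    rw [this, div_mul_eq_mul_div, le_div_iff₀ d2]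
    nlinarith [mul_nonneg (mul_nonneg hw.le (sub_nonneg.2 hvw)) (by linarith : (0:ℝ) ≤ (q:ℝ)-1)]
  · have hqp := (Finset.mem_filter.1 hq).2
    have d2 : 0 < (q : ℝ) - 1 + w := denom_pos hqp hw
    positivity

lemma rhoXi_mono {ξ ξ' : ℝ} (h : ξ ≤ ξ') (hne : (Mset ξ').Nonempty) : rhoXi ξ ≤ rhoXi ξ' :=
  csInf_le_csInf (Mset_bddBelow ξ) hne (fun v hv => ⟨hv.1, le_trans h hv.2⟩)

lemma rhoXi_scale {ξ ξ' : ℝ} (hξ : 0 < ξ) (h : ξ ≤ ξ') (hne : (Mset ξ).Nonempty) :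
    rhoXi ξ' ≤ rhoXi ξ * (ξ' / ξ) := by
  have ht1 : (1:ℝ) ≤ ξ' / ξ := (one_le_div hξ).2 h
  have ht0 : 0 < ξ' / ξ := lt_of_lt_of_le one_pos ht1
  have key : ∀ ε > (0:ℝ), rhoXi ξ' ≤ (rhoXi ξ + ε) * (ξ' / ξ) := by
    intro ε hε
    obtain ⟨w, hwM, hw⟩ := exists_lt_of_csInf_lt hne (lt_add_of_pos_right (rhoXi ξ) hε)
    have hw0 : 0 < w := hwM.1
    have hmem : w * (ξ' / ξ) ∈ Mset ξ' := by
      constructor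
      · positivity
      · have := Gfun_growth hw0 (le_mul_of_one_le_right hw0.le ht1)
        have heq : w * (ξ' / ξ) / w = ξ' / ξ := by field_simp
        rw [heq] at this
        calc ξ' = (ξ' / ξ) * ξ := by field_simp
          _ ≤ (ξ' / ξ) * Gfun w := by
              exact mul_le_mul_of_nonneg_left hwM.2 ht0.le
          _ ≤ Gfun (w * (ξ' / ξ)) := this
    calc rhoXi ξ' ≤ w * (ξ' / ξ) := csInf_le (Mset_bddBelow _) hmem
      _ ≤ (rhoXi ξ + ε) * (ξ' / ξ) := mul_le_mul_of_nonneg_right hw.le ht0.le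
  by_contra hcon
  push_neg at hcon
  obtain ⟨ε, hε, hlt⟩ : ∃ ε > (0:ℝ), (rhoXi ξ + ε) * (ξ' / ξ) < rhoXi ξ' := by
    have hpos : 0 < rhoXi ξ' - rhoXi ξ * (ξ' / ξ) := by linarith
    refine ⟨(rhoXi ξ' - rhoXi ξ * (ξ' / ξ)) / (2 * (ξ' / ξ)), div_pos hpos (by positivity), ?_⟩
    rw [add_mul]
    rw [div_mul_eq_mul_div, mul_comm (2:ℝ) (ξ'/ξ), ← div_div, mul_div_assoc]
    rw [div_self ht0.ne']
    linarith
  exact absurd (key ε hε) (not_le.2 hlt)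

def pic (m : ℕ) : ℕ := ((Finset.range m).filter Nat.Prime).card

lemma pic_mono {m n : ℕ} (h : m ≤ n) : pic m ≤ pic n :=
  Finset.card_le_card (Finset.filter_subset_filter _ (Finset.range_subset_range.2 h))

lemma pic_succ (n : ℕ) : pic (n + 1) = pic n + if n.Prime then 1 else 0 := by
  unfold pic
  rw [Finset.range_add_one, Finset.filter_insert]
  split
  · rw [Finset.card_insert_of_notMem (by simp)]
  · simp

lemma centralBinom_le (n : ℕ) (hn : 1 ≤ n) :
    Nat.centralBinom n ≤ (2 * n) ^ (pic (2 * n + 1)) := by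
  have h0 : Nat.centralBinom n ≠ 0 := (Nat.centralBinom_pos n).ne'
  have hsub : (Nat.centralBinom n).factorization.support ⊆
      (Finset.range (2 * n + 1)).filter Nat.Prime := by
    intro p hp
    have hpp : p.Prime := Nat.prime_of_mem_primeFactors (by rwa [← Nat.support_factorization])
    have hple : p ^ (Nat.centralBinom n).factorization p ≤ 2 * n := by
      rw [Nat.centralBinom]
      exact Nat.pow_factorization_choose_le (by omega)
    have hne : (Nat.centralBinom n).factorization p ≠ 0 := Finsupp.mem_support_iff.1 hp
    have : p ≤ 2 * n := le_trans (Nat.le_self_pow hne p) hple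
    simp [Finset.mem_filter, Finset.mem_range, hpp]
    omega
  calc Nat.centralBinom n
      = ∏ p ∈ (Nat.centralBinom n).factorization.support,
          p ^ (Nat.centralBinom n).factorization p := by
        conv_lhs => rw [← Nat.factorization_prod_pow_eq_self h0]
        rfl
    _ ≤ ∏ _p ∈ (Nat.centralBinom n).factorization.support, 2 * n := by
        refine Finset.prod_le_prod' fun p hp => ?_
        have hpp : p.Prime := Nat.prime_of_mem_primeFactors (by rwa [← Nat.support_factorization])
        rw [Nat.centralBinom]
        exact Nat.pow_factorization_choose_le (by omega)
    _ = (2 * n) ^ (Nat.centralBinom n).factorization.support.card := by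
        rw [Finset.prod_const]
    _ ≤ (2 * n) ^ (pic (2 * n + 1)) :=
        Nat.pow_le_pow_right (by omega) (Finset.card_le_card hsub)

lemma cheb {m : ℕ} (hm : 128 ≤ m) : (m : ℝ) ≤ 4 * pic m * Real.log m := by
  set n := m / 2 with hn
  have hn64 : 64 ≤ n := by omega
  have h2n : 2 * n ≤ m ∧ m ≤ 2 * n + 1 := by omega
  -- nat inequality
  have hnat : 4 ^ n ≤ (2 * n) ^ (pic (2 * n + 1) + 1) := by
    calc 4 ^ n ≤ n * Nat.centralBinom n := (Nat.four_pow_lt_mul_centralBinom n (by omega)).le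
      _ ≤ (2 * n) * (2 * n) ^ (pic (2 * n + 1)) :=
          Nat.mul_le_mul (by omega) (centralBinom_le n (by omega))
      _ = (2 * n) ^ (pic (2 * n + 1) + 1) := by rw [pow_succ]; ring
  have hpic : pic (2 * n + 1) ≤ pic m + 1 := by
    calc pic (2 * n + 1) ≤ pic (m + 1) := pic_mono (by omega)
      _ ≤ pic m + 1 := by rw [pic_succ]; split <;> omega
  -- move to ℝ
  have hreal : (n : ℝ) * Real.log 4 ≤ ((pic (2 * n + 1) : ℝ) + 1) * Real.log (2 * n) := by
    have h1 : ((4:ℝ)) ^ n ≤ ((2 * n : ℕ) : ℝ) ^ (pic (2 * n + 1) + 1) := by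
      exact_mod_cast hnat
    have h2 := Real.log_le_log (by positivity) h1
    rw [Real.log_pow, Real.log_pow] at h2
    push_cast at h2 ⊢
    exact h2
  have hlog2n : Real.log (2 * n) ≤ Real.log m := by
    apply Real.log_le_log (by positivity)
    exact_mod_cast h2n.1
  have hlogm_pos : 0 < Real.log m := Real.log_pos (by exact_mod_cast (by omega : 1 < m))
  have hlog2n_nonneg : 0 ≤ Real.log (2 * n) := Real.log_nonneg (by
    have : (1:ℝ) ≤ (n:ℝ) := by exact_mod_cast (by omega : 1 ≤ n)
    linarith)
  have hA : (n : ℝ) * Real.log 4 ≤ ((pic m : ℝ) + 2) * Real.log m := by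
    calc (n : ℝ) * Real.log 4 ≤ ((pic (2 * n + 1) : ℝ) + 1) * Real.log (2 * n) := hreal
      _ ≤ ((pic m : ℝ) + 2) * Real.log (2 * n) := by
          have : ((pic (2 * n + 1) : ℝ) + 1) ≤ (pic m : ℝ) + 2 := by
            exact_mod_cast Nat.succ_le_succ hpic
          exact mul_le_mul_of_nonneg_right this hlog2n_nonneg
      _ ≤ ((pic m : ℝ) + 2) * Real.log m := by
          have : (0:ℝ) ≤ (pic m : ℝ) + 2 := by positivity
          exact mul_le_mul_of_nonneg_left hlog2n this
  have hlog4 : (1.386:ℝ) ≤ Real.log 4 := by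
    have h4 : (4:ℝ) = 2 ^ 2 := by norm_num
    rw [h4, Real.log_pow]
    have := Real.log_two_gt_d9
    push_cast
    linarith
  have hnm : ((m : ℝ) - 1) / 2 ≤ (n : ℝ) := by
    have : (m:ℝ) ≤ 2 * n + 1 := by exact_mod_cast h2n.2
    linarith
  set s := Real.sqrt m with hs
  have hs0 : 0 ≤ s := Real.sqrt_nonneg _
  have hsq : s ^ 2 = (m:ℝ) := Real.sq_sqrt (by positivity)
  have hs11 : 11 ≤ s := by
    have h121 : Real.sqrt 121 ≤ s := Real.sqrt_le_sqrt (by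
      have : (128:ℝ) ≤ (m:ℝ) := by exact_mod_cast hm
      linarith)
    rwa [show Real.sqrt 121 = 11 by
      rw [show (121:ℝ) = 11 ^ 2 by norm_num, Real.sqrt_sq (by norm_num)]] at h121
  have hlogms : Real.log m ≤ 2 * s - 2 := by
    have h1 : Real.log m = 2 * Real.log s := by
      rw [hs, Real.log_sqrt (by positivity)]; ring
    have h2 : Real.log s ≤ s - 1 := Real.log_le_sub_one_of_pos (by linarith)
    linarith
  have hApos : ((m:ℝ) - 1) / 2 * 1.386 ≤ ((pic m : ℝ) + 2) * Real.log m := by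
    calc ((m:ℝ) - 1) / 2 * 1.386 ≤ (n:ℝ) * Real.log 4 := by
          apply mul_le_mul hnm hlog4 (by norm_num) (by positivity)
      _ ≤ _ := hA
  have hk0 : (0:ℝ) ≤ (pic m : ℝ) := by positivity
  nlinarith [sq_nonneg (s - 11), hsq, hlogms, hApos, hlogm_pos, hs11]

lemma loglog_step {k : ℕ} (hk : 2 ≤ k) :
    Real.log (Real.log ((k:ℝ) + 1)) - Real.log (Real.log k) ≤ 1 / (k * Real.log k) := by
  have hk2 : (2:ℝ) ≤ (k:ℝ) := by exact_mod_cast hk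
  have hk0 : (0:ℝ) < k := by linarith
  have ha : 0 < Real.log k := Real.log_pos (by linarith)
  have hb : 0 < Real.log ((k:ℝ) + 1) := Real.log_pos (by linarith)
  have hba : Real.log ((k:ℝ)+1) ≤ Real.log k + 1 / k := by
    have h1 : Real.log ((k:ℝ)+1) - Real.log k = Real.log (((k:ℝ)+1)/k) := by
      rw [Real.log_div (by linarith) hk0.ne']
    have h2 : Real.log (((k:ℝ)+1)/k) ≤ ((k:ℝ)+1)/k - 1 :=
      Real.log_le_sub_one_of_pos (by positivity)
    have h3 : ((k:ℝ)+1)/k - 1 = 1/k := by field_simp; ring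
    linarith
  have h4 : Real.log (Real.log ((k:ℝ)+1)) - Real.log (Real.log k)
      = Real.log (Real.log ((k:ℝ)+1) / Real.log k) := by
    rw [Real.log_div hb.ne' ha.ne']
  have h5 : Real.log (Real.log ((k:ℝ)+1) / Real.log k) ≤
      Real.log ((k:ℝ)+1) / Real.log k - 1 := Real.log_le_sub_one_of_pos (by positivity)
  have h6 : Real.log ((k:ℝ)+1) / Real.log k - 1 ≤ 1 / (k * Real.log k) := by
    rw [div_sub_one ha.ne', div_le_div_iff₀ ha (by positivity)]
    have : Real.log ((k:ℝ)+1) - Real.log k ≤ 1 / k := by linarith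
    calc (Real.log ((k:ℝ)+1) - Real.log k) * ((k:ℝ) * Real.log k)
        ≤ (1/k) * ((k:ℝ) * Real.log k) := by
          apply mul_le_mul_of_nonneg_right this (by positivity)
      _ = 1 * Real.log k := by field_simp
  linarith

lemma abel_key (v : ℝ) (hv : 0 < v) (M : ℕ) :
    ∀ n, M ≤ n →
      (∑ m ∈ Finset.Ico M n, (pic (m+1) : ℝ) * (1/((m:ℝ)+v) - 1/(((m:ℝ)+1)+v)))
        + (pic n : ℝ) * (1/((n:ℝ)+v))
      ≤ ∑ q ∈ (Finset.range n).filter Nat.Prime, 1/((q:ℝ)+v) := by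
  intro n hn
  induction n, hn using Nat.le_induction with
  | base =>
      rw [Finset.Ico_self, Finset.sum_empty, zero_add]
      have : ((Finset.range M).filter Nat.Prime).card • (1/((M:ℝ)+v)) ≤
          ∑ q ∈ (Finset.range M).filter Nat.Prime, 1/((q:ℝ)+v) := by
        apply Finset.card_nsmul_le_sum
        intro q hq
        have hqM : q < M := Finset.mem_range.1 (Finset.mem_filter.1 hq).1
        apply one_div_le_one_div_of_le (by positivity)
        have : (q:ℝ) ≤ M := by exact_mod_cast hqM.le
        linarith
      rw [nsmul_eq_mul] at this
      exact this
  | succ n hMn ih =>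
      rw [Finset.sum_Ico_succ_top hMn]
      have hFsucc : ∑ q ∈ (Finset.range (n+1)).filter Nat.Prime, 1/((q:ℝ)+v)
          = (∑ q ∈ (Finset.range n).filter Nat.Prime, 1/((q:ℝ)+v))
            + (if n.Prime then 1/((n:ℝ)+v) else 0) := by
        rw [Finset.range_add_one, Finset.filter_insert]
        split
        · rw [Finset.sum_insert (by simp)]; ring
        · rw [add_zero]
      have hpsucc : (pic (n+1) : ℝ) = (pic n : ℝ) + (if n.Prime then 1 else 0) := by
        rw [pic_succ]; push_cast; split <;> simp
      rw [hFsucc]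
      push_cast
      rw [hpsucc]
      split <;> rename_i hnp
      · have hring : (((pic n):ℝ) + 1) * (1/((n:ℝ)+v) - 1/((n:ℝ)+1+v))
            + (((pic n):ℝ) + 1) * (1/((n:ℝ)+1+v))
            = (pic n : ℝ) * (1/((n:ℝ)+v)) + 1/((n:ℝ)+v) := by ring
        linarith [ih]
      · have hring : (((pic n):ℝ) + 0) * (1/((n:ℝ)+v) - 1/((n:ℝ)+1+v))
            + (((pic n):ℝ) + 0) * (1/((n:ℝ)+1+v))
            = (pic n : ℝ) * (1/((n:ℝ)+v)) := by ring
        linarith [ih]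

lemma log_add_le_sqrt {v : ℝ} (hv : 450 ≤ v) : Real.log (v + 67) ≤ Real.sqrt v := by
  set a := Real.sqrt v with ha
  set b := Real.sqrt (v + 67) with hb
  set c := Real.sqrt b with hc
  have hv0 : (0:ℝ) < v := by linarith
  have ha0 : 0 ≤ a := Real.sqrt_nonneg _
  have hb0 : 0 ≤ b := Real.sqrt_nonneg _
  have hc0 : 0 ≤ c := Real.sqrt_nonneg _
  have ha2 : a ^ 2 = v := Real.sq_sqrt hv0.le
  have hb2 : b ^ 2 = v + 67 := Real.sq_sqrt (by linarith)
  have hc2 : c ^ 2 = b := Real.sq_sqrt hb0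
  have ha21 : 21 ≤ a := by nlinarith
  have hb1 : 1 ≤ b := by nlinarith
  have hc1 : 1 ≤ c := by nlinarith
  have hlog : Real.log (v + 67) = 4 * Real.log c := by
    have e1 : Real.log b = Real.log (v + 67) / 2 := by rw [hb]; exact Real.log_sqrt (by linarith)
    have e2 : Real.log c = Real.log b / 2 := by rw [hc]; exact Real.log_sqrt hb0
    linarith
  have hlc : Real.log c ≤ c - 1 := Real.log_le_sub_one_of_pos (by linarith)
  have hkey : 4 * c ≤ a + 4 := by
    have hc4 : c ^ 4 = v + 67 := by
      have : (c ^ 2) ^ 2 = b ^ 2 := by rw [hc2]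
      nlinarith
    have hd4 : c ^ 4 ≤ ((a + 4) / 4) ^ 4 := by
      rw [hc4]
      have h1 : ((a + 4) / 4) ^ 4 = (a + 4) ^ 4 / 256 := by ring
      rw [h1, le_div_iff₀ (by norm_num : (0:ℝ) < 256)]
      nlinarith [sq_nonneg a, sq_nonneg (a - 21)]
    have : c ≤ (a + 4) / 4 := by
      by_contra hcon
      push_neg at hcon
      have h4 : ((a + 4) / 4) ^ 4 < c ^ 4 := by
        apply pow_lt_pow_left₀ hcon (by positivity) (by norm_num)
      linarith
    linarith
  linarith

lemma Sfun_lb {v : ℝ} (hv : 450 ≤ v) : Real.log v / 32 ≤ Sfun v := by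
  have hv0 : (0:ℝ) < v := by linarith
  set N := ⌈Real.exp v⌉₊ with hN
  set M := ⌈v⌉₊ + 65 with hM
  have hceilv : (⌈v⌉₊ : ℝ) < v + 1 := Nat.ceil_lt_add_one hv0.le
  have hMle : (M : ℝ) ≤ v + 66 := by rw [hM]; push_cast; linarith
  have hvceil : v ≤ (⌈v⌉₊ : ℝ) := Nat.le_ceil v
  have hMge : v + 65 ≤ (M : ℝ) := by rw [hM]; push_cast; linarith
  have hexpN : Real.exp v ≤ (N : ℝ) := Nat.le_ceil _
  have hexp_big : v + 66 ≤ Real.exp v := by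
    have h1 : v / 2 + 1 ≤ Real.exp (v / 2) := Real.add_one_le_exp _
    have h2 : Real.exp v = Real.exp (v/2) * Real.exp (v/2) := by
      rw [← Real.exp_add]; ring_nf
    nlinarith [Real.exp_pos (v/2)]
  have hMN : M ≤ N := by
    have : (M:ℝ) ≤ (N:ℝ) := by linarith
    exact_mod_cast this
  -- φ
  set φ : ℕ → ℝ := fun k => Real.log (Real.log ((k:ℝ) + 1)) with hφ
  -- step 1: Sfun v ≥ F N
  have step1 : ∑ q ∈ (Finset.range N).filter Nat.Prime, 1/((q:ℝ)+v) ≤ Sfun v := by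
    apply Finset.sum_le_sum
    intro q hq
    have hqp := (Finset.mem_filter.1 hq).2
    have h2 : (2:ℝ) ≤ (q:ℝ) := by exact_mod_cast hqp.two_le
    apply one_div_le_one_div_of_le (by linarith) (by linarith)
  -- step 2: A N ≤ F N
  have step2 := abel_key v hv0 M N hMN
  -- step 3: termwise lower bound for A
  have step3 : ∀ m ∈ Finset.Ico M N,
      (1/16) * (φ (m+1) - φ m) ≤ (pic (m+1) : ℝ) * (1/((m:ℝ)+v) - 1/(((m:ℝ)+1)+v)) := by
    intro m hm
    obtain ⟨hmM, hmN⟩ := Finset.mem_Ico.1 hm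
    have hm450 : 450 ≤ ⌈v⌉₊ := by
      have : (450:ℝ) ≤ (⌈v⌉₊:ℝ) := le_trans hv (Nat.le_ceil v)
      exact_mod_cast this
    have hm128 : 128 ≤ m + 1 := by omega
    have hmreal : v + 65 ≤ (m:ℝ) := by
      have : (M:ℝ) ≤ (m:ℝ) := by exact_mod_cast hmM
      linarith
    have hm1 : (0:ℝ) < (m:ℝ) + 1 := by linarith
    have hL : 0 < Real.log ((m:ℝ)+1) := Real.log_pos (by linarith)
    have hLcast : Real.log (((m+1 : ℕ)):ℝ) = Real.log ((m:ℝ)+1) := by push_cast; rfl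
    have hcheb : ((m:ℝ)+1) ≤ 4 * (pic (m+1) : ℝ) * Real.log ((m:ℝ)+1) := by
      have := cheb hm128
      rw [hLcast] at this
      push_cast at this
      linarith
    have hpic_lb : ((m:ℝ)+1) / (4 * Real.log ((m:ℝ)+1)) ≤ (pic (m+1) : ℝ) := by
      rw [div_le_iff₀ (by positivity)]
      linarith [hcheb]
    have hdiff : 1/((m:ℝ)+v) - 1/(((m:ℝ)+1)+v) = 1/(((m:ℝ)+v) * (((m:ℝ)+1)+v)) := by
      rw [div_sub_div _ _ (ne_of_gt (by linarith : (0:ℝ) < (m:ℝ)+v)) (ne_of_gt (by linarith : (0:ℝ) < ((m:ℝ)+1)+v))]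
      congr 1
      ring
    have hvm : v ≤ (m:ℝ) := by linarith
    have hdenom : ((m:ℝ)+v) * (((m:ℝ)+1)+v) ≤ 4 * ((m:ℝ)+1)^2 := by nlinarith [hvm, hv0]
    have hdiff_lb : 1/(4 * ((m:ℝ)+1)^2) ≤ 1/((m:ℝ)+v) - 1/(((m:ℝ)+1)+v) := by
      rw [hdiff]
      apply one_div_le_one_div_of_le (by nlinarith [hvm, hv0]) hdenom
    have hprod : 1/(16 * ((m:ℝ)+1) * Real.log ((m:ℝ)+1)) ≤
        (pic (m+1) : ℝ) * (1/((m:ℝ)+v) - 1/(((m:ℝ)+1)+v)) := by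
      have h1 : (((m:ℝ)+1) / (4 * Real.log ((m:ℝ)+1))) * (1/(4 * ((m:ℝ)+1)^2))
          = 1/(16 * ((m:ℝ)+1) * Real.log ((m:ℝ)+1)) := by
        field_simp
        ring
      rw [← h1]
      apply mul_le_mul hpic_lb hdiff_lb (by positivity) (by positivity)
    have htele : φ (m+1) - φ m ≤ 1 / (((m:ℝ)+1) * Real.log ((m:ℝ)+1)) := by
      have := loglog_step (k := m+1) (by omega)
      push_cast at this
      simpa [hφ] using this
    calc (1/16) * (φ (m+1) - φ m) ≤ (1/16) * (1 / (((m:ℝ)+1) * Real.log ((m:ℝ)+1))) := by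
          apply mul_le_mul_of_nonneg_left htele (by norm_num)
      _ = 1/(16 * ((m:ℝ)+1) * Real.log ((m:ℝ)+1)) := by field_simp
      _ ≤ _ := hprod
  -- step 4: telescoping
  have step4 : ∑ m ∈ Finset.Ico M N, (φ (m+1) - φ m) = φ N - φ M := by
    rw [Finset.sum_Ico_eq_sub _ hMN, Finset.sum_range_sub, Finset.sum_range_sub]
    ring
  -- step 5: φ N - φ M ≥ (1/2) log v
  have hφN : Real.log v ≤ φ N := by
    have h1 : v ≤ Real.log ((N:ℝ)+1) := by
      have hN1 : Real.exp v ≤ (N:ℝ) + 1 := by linarith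
      calc v = Real.log (Real.exp v) := (Real.log_exp v).symm
        _ ≤ Real.log ((N:ℝ)+1) := Real.log_le_log (Real.exp_pos v) hN1
    exact Real.log_le_log (by linarith) h1
  have hφM : φ M ≤ Real.log v / 2 := by
    have h1 : Real.log ((M:ℝ)+1) ≤ Real.sqrt v := by
      calc Real.log ((M:ℝ)+1) ≤ Real.log (v + 67) := by
            apply Real.log_le_log (by positivity)
            linarith
        _ ≤ Real.sqrt v := log_add_le_sqrt hv
    calc φ M ≤ Real.log (Real.sqrt v) := by
          apply Real.log_le_log ?_ h1
          apply Real.log_pos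
          linarith
      _ = Real.log v / 2 := Real.log_sqrt hv0.le
  have hlogv_pos : 0 < Real.log v := Real.log_pos (by linarith)
  -- assemble
  have hsum : (1/16) * (φ N - φ M) ≤
      ∑ m ∈ Finset.Ico M N, (pic (m+1) : ℝ) * (1/((m:ℝ)+v) - 1/(((m:ℝ)+1)+v)) := by
    calc (1/16) * (φ N - φ M) = ∑ m ∈ Finset.Ico M N, (1/16) * (φ (m+1) - φ m) := by
          rw [← Finset.mul_sum, step4]
      _ ≤ _ := Finset.sum_le_sum step3
  have hpicN : (0:ℝ) ≤ (pic N : ℝ) * (1/((N:ℝ)+v)) :=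
    mul_nonneg (Nat.cast_nonneg _) (one_div_nonneg.2 (add_nonneg (Nat.cast_nonneg _) hv0.le))
  calc Real.log v / 32 = (1/16) * (Real.log v - Real.log v / 2) := by ring
    _ ≤ (1/16) * (φ N - φ M) := by
        apply mul_le_mul_of_nonneg_left (by linarith) (by norm_num)
    _ ≤ ∑ m ∈ Finset.Ico M N, (pic (m+1) : ℝ) * (1/((m:ℝ)+v) - 1/(((m:ℝ)+1)+v)) := hsum
    _ ≤ ∑ q ∈ (Finset.range N).filter Nat.Prime, 1/((q:ℝ)+v) := by linarith [step2, hpicN]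
    _ ≤ Sfun v := step1

lemma sqrt_le_quarter_add_one {L : ℝ} (hL : 0 ≤ L) : Real.sqrt L ≤ L / 4 + 1 := by
  have h := sq_nonneg (Real.sqrt L - 2)
  have hs : Real.sqrt L ^ 2 = L := Real.sq_sqrt hL
  nlinarith [Real.sqrt_nonneg L]

lemma log_le_half {L : ℝ} (hL : 1 ≤ L) : Real.log L ≤ L / 2 := by
  have h1 : Real.log L = 2 * Real.log (Real.sqrt L) := by
    rw [Real.log_sqrt (by linarith)]; ring
  have h2 : Real.log (Real.sqrt L) ≤ Real.sqrt L - 1 :=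
    Real.log_le_sub_one_of_pos (Real.sqrt_pos.2 (by linarith))
  have h3 := sqrt_le_quarter_add_one (by linarith : (0:ℝ) ≤ L)
  linarith

lemma exp13_big : (202500 : ℝ) ≤ Real.exp 13 := by
  have h1 : Real.exp 13 = Real.exp 1 ^ (13:ℕ) := by
    rw [← Real.exp_nat_mul]; norm_num
  have h2 : (2.7:ℝ) ^ (13:ℕ) ≤ Real.exp 1 ^ (13:ℕ) := by
    apply pow_le_pow_left₀ (by norm_num)
    linarith [Real.exp_one_gt_d9]
  have h3 : (202500:ℝ) ≤ (2.7:ℝ) ^ (13:ℕ) := by norm_num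
  linarith

lemma rhoXi_mem {ξ : ℝ} (hξ : Real.exp 13 ≤ ξ) :
    (30 * Real.sqrt ξ / Real.sqrt (Real.log ξ)) ∈ Mset ξ := by
  have hξ0 : 0 < ξ := lt_of_lt_of_le (Real.exp_pos 13) hξ
  have hL13 : 13 ≤ Real.log ξ := by
    calc (13:ℝ) = Real.log (Real.exp 13) := (Real.log_exp 13).symm
      _ ≤ Real.log ξ := Real.log_le_log (Real.exp_pos 13) hξ
  set L := Real.log ξ with hLdef
  have hL0 : 0 < L := by linarith
  set s := Real.sqrt ξ with hs
  set t := Real.sqrt L with ht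
  have hs0 : 0 < s := Real.sqrt_pos.2 hξ0
  have ht0 : 0 < t := Real.sqrt_pos.2 hL0
  have hs2 : s ^ 2 = ξ := Real.sq_sqrt hξ0.le
  have ht2 : t ^ 2 = L := Real.sq_sqrt hL0.le
  set v := 30 * s / t with hv
  have hv0 : 0 < v := by positivity
  have hv2 : v ^ 2 = 900 * ξ / L := by
    rw [hv, div_pow]
    rw [mul_pow, hs2, ht2]
    ring_nf
  -- ξ ≥ 225 * L
  have hξ225 : 225 * L ≤ ξ := by
    have h1 : L ≤ 2 * s - 2 := by
      have e1 : L = 2 * Real.log s := by rw [hs, Real.log_sqrt hξ0.le]; ring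
      have e2 : Real.log s ≤ s - 1 := Real.log_le_sub_one_of_pos hs0
      linarith
    have h2 : (450:ℝ) ≤ s := by
      have : (202500:ℝ) ≤ ξ := le_trans exp13_big hξ
      nlinarith
    nlinarith
  have hv450 : 450 ≤ v := by
    have h1 : (202500:ℝ) ≤ v ^ 2 := by
      rw [hv2, le_div_iff₀ hL0]
      linarith
    nlinarith [hv0.le]
  -- log v ≥ L / 4
  have hlogv : L / 4 ≤ Real.log v := by
    have e1 : Real.log v = Real.log 30 + Real.log s - Real.log t := by
      rw [hv, Real.log_div (by positivity) ht0.ne', Real.log_mul (by norm_num) hs0.ne']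
    have e2 : Real.log s = L / 2 := by rw [hs, Real.log_sqrt hξ0.le, hLdef]
    have e3 : Real.log t = Real.log L / 2 := by rw [ht, Real.log_sqrt hL0.le]
    have e4 : Real.log L ≤ L / 2 := log_le_half (by linarith)
    have e5 : 0 ≤ Real.log 30 := Real.log_nonneg (by norm_num)
    rw [e1, e2, e3]
    linarith
  refine ⟨hv0, ?_⟩
  have hSlb : Real.log v / 32 ≤ Sfun v := Sfun_lb hv450
  have hSpos : L / 128 ≤ Sfun v := by linarith
  have hfin : L / 900 ≤ Sfun v := by
    have h9 : L / 900 ≤ L / 128 := by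
      apply div_le_div_of_nonneg_left hL0.le (by norm_num) (by norm_num)
    linarith
  have hfactor : (0:ℝ) ≤ 900 * ξ / L := by
    apply le_of_lt
    apply div_pos (by linarith) hL0
  calc ξ = (900 * ξ / L) * (L / 900) := by field_simp
    _ ≤ (900 * ξ / L) * Sfun v := mul_le_mul_of_nonneg_left hfin hfactor
    _ = v ^ 2 * Sfun v := by rw [hv2]
    _ = Gfun v := rfl

set_option maxHeartbeats 1000000 in
theorem rho_local_behaviour (ε C : ℝ) (hε : 0 < ε) (hε1 : ε < 1) (hC : 0 < C) :
    ∃ C' : ℝ, ∃ x₁ : ℝ, ∀ x ≥ x₁, ∀ h : ℝ, -1 + ε < h →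
      |Real.log (1 + h)| ≤ C * Real.sqrt (Real.log (Real.log x)) /
          Real.log (Real.log (Real.log x)) ^ ((3 : ℝ) / 2) →
      |rho (x ^ (1 + h)) - rho x| ≤ C' / Real.log (Real.log (Real.log x)) ^ 2 := by
  refine ⟨100 * C, Real.exp (Real.exp (2 * Real.exp 13 + 4 * C ^ 2 + 4)), ?_⟩
  intro x hx h hh hlog
  set Ξ : ℝ := 2 * Real.exp 13 + 4 * C ^ 2 + 4 with hΞdef
  have hΞpos : 0 < Ξ := by positivity
  have hx0 : 0 < x := lt_of_lt_of_le (Real.exp_pos _) hx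
  have hlogx : Real.exp Ξ ≤ Real.log x := by
    calc Real.exp Ξ = Real.log (Real.exp (Real.exp Ξ)) := (Real.log_exp _).symm
      _ ≤ Real.log x := Real.log_le_log (Real.exp_pos _) hx
  have hlogx0 : 0 < Real.log x := lt_of_lt_of_le (Real.exp_pos _) hlogx
  set ξ := Real.log (Real.log x) with hξdef
  have hξΞ : Ξ ≤ ξ := by
    calc Ξ = Real.log (Real.exp Ξ) := (Real.log_exp _).symm
      _ ≤ ξ := Real.log_le_log (Real.exp_pos _) hlogx
  have he13 : Real.exp 13 ≤ ξ := by linarith [sq_nonneg C, Real.exp_pos (13:ℝ)]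
  have hξ0 : 0 < ξ := lt_of_lt_of_le (Real.exp_pos 13) he13
  set L := Real.log ξ with hLdef
  have hL13 : 13 ≤ L := by
    calc (13:ℝ) = Real.log (Real.exp 13) := (Real.log_exp _).symm
      _ ≤ L := Real.log_le_log (Real.exp_pos _) he13
  have hL0 : 0 < L := by linarith
  set δ := Real.log (1 + h) with hδdef
  set s := Real.sqrt ξ with hs
  set t := Real.sqrt L with ht
  set P := L ^ ((3:ℝ)/2) with hP
  have hs0 : 0 < s := Real.sqrt_pos.2 hξ0
  have ht0 : 0 < t := Real.sqrt_pos.2 hL0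
  have hs2 : s ^ 2 = ξ := Real.sq_sqrt hξ0.le
  have ht2 : t ^ 2 = L := Real.sq_sqrt hL0.le
  have hP0 : 0 < P := Real.rpow_pos_of_pos hL0 _
  have hP1 : 1 ≤ P := Real.one_le_rpow (by linarith) (by norm_num)
  have htP : t * P = L ^ 2 := by
    rw [ht, Real.sqrt_eq_rpow, hP, ← Real.rpow_add hL0]
    norm_num
  have hδle : |δ| ≤ C * s / P := hlog
  have hδle2 : |δ| ≤ C * s := by
    calc |δ| ≤ C * s / P := hδle
      _ ≤ C * s / 1 := by
          apply div_le_div_of_nonneg_left (by positivity) (by norm_num) hP1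
      _ = C * s := by ring
  have hsC : 2 * C ≤ s := by
    have h1 : 4 * C ^ 2 ≤ ξ := by linarith [Real.exp_pos (13:ℝ)]
    nlinarith [hs2, hs0.le, hC.le]
  have hδhalf : |δ| ≤ ξ / 2 := by nlinarith [abs_nonneg δ, hδle2, hsC, hs2, hs0.le, hC.le]
  -- ξ' = log log (x ^ (1+h))
  have h1p : 0 < 1 + h := by linarith
  have hξ' : Real.log (Real.log (x ^ (1 + h))) = δ + ξ := by
    rw [Real.log_rpow hx0, Real.log_mul h1p.ne' hlogx0.ne']
  set ξ' := δ + ξ with hξ'def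
  have hξ'lb : ξ / 2 ≤ ξ' := by
    have := abs_le.1 hδhalf
    rw [hξ'def]; linarith [this.1]
  have hξ'ub : ξ' ≤ 3 * ξ / 2 := by
    have := abs_le.1 hδhalf
    rw [hξ'def]; linarith [this.2]
  have he13' : Real.exp 13 ≤ ξ' := by linarith [sq_nonneg C, Real.exp_pos (13:ℝ)]
  have hξ'0 : 0 < ξ' := lt_of_lt_of_le (Real.exp_pos 13) he13'
  have hneM : (Mset ξ).Nonempty := ⟨_, rhoXi_mem he13⟩
  have hneM' : (Mset ξ').Nonempty := ⟨_, rhoXi_mem he13'⟩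
  have hρub : rhoXi ξ ≤ 30 * s / t := csInf_le (Mset_bddBelow _) (rhoXi_mem he13)
  have hρ0 : 0 ≤ rhoXi ξ := rhoXi_nonneg ξ
  have hρ'0 : 0 ≤ rhoXi ξ' := rhoXi_nonneg ξ'
  rw [rho_eq_rhoXi, rho_eq_rhoXi, hξ', ← hξdef]
  have hgoal : |rhoXi ξ' - rhoXi ξ| ≤ 100 * C / L ^ 2 := by
    rcases le_or_gt ξ ξ' with hc | hc
    · -- ξ ≤ ξ', δ ≥ 0
      have hδ0 : 0 ≤ δ := by rw [hξ'def] at hc; linarith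
      have hmono : rhoXi ξ ≤ rhoXi ξ' := rhoXi_mono hc hneM'
      have hscale : rhoXi ξ' ≤ rhoXi ξ * (ξ' / ξ) := rhoXi_scale hξ0 hc hneM
      have habs : |rhoXi ξ' - rhoXi ξ| = rhoXi ξ' - rhoXi ξ := abs_of_nonneg (by linarith)
      rw [habs]
      have hδabs : δ ≤ C * s / P := by
        calc δ ≤ |δ| := le_abs_self δ
          _ ≤ C * s / P := hδle
      have key : rhoXi ξ' - rhoXi ξ ≤ rhoXi ξ * δ / ξ := by
        have : rhoXi ξ * (ξ' / ξ) - rhoXi ξ = rhoXi ξ * δ / ξ := by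
          rw [hξ'def]; field_simp; ring
        linarith
      have hst0 : (0:ℝ) ≤ 30 * s / t := le_of_lt (div_pos (by linarith) ht0)
      calc rhoXi ξ' - rhoXi ξ ≤ rhoXi ξ * δ / ξ := key
        _ ≤ (30 * s / t) * (C * s / P) / ξ := by
            apply (div_le_div_iff_of_pos_right hξ0).2
            exact mul_le_mul hρub hδabs hδ0 hst0
        _ = 30 * C / L ^ 2 := by
            rw [← htP, ← hs2]
            field_simp
        _ ≤ 100 * C / L ^ 2 := by
            apply (div_le_div_iff_of_pos_right (pow_pos hL0 2)).2
            linarith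
    · -- ξ' < ξ, δ < 0
      have hmono : rhoXi ξ' ≤ rhoXi ξ := rhoXi_mono hc.le hneM
      have hscale : rhoXi ξ ≤ rhoXi ξ' * (ξ / ξ') := rhoXi_scale hξ'0 hc.le hneM'
      have habs : |rhoXi ξ' - rhoXi ξ| = rhoXi ξ - rhoXi ξ' := by
        rw [abs_sub_comm]; exact abs_of_nonneg (by linarith)
      rw [habs]
      have hδabs : -δ ≤ C * s / P := by
        calc -δ ≤ |δ| := neg_le_abs δ
          _ ≤ C * s / P := hδle
      have hδ0 : 0 ≤ -δ := by rw [hξ'def] at hc; linarith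
      have key : rhoXi ξ - rhoXi ξ' ≤ rhoXi ξ' * (-δ) / ξ' := by
        have : rhoXi ξ' * (ξ / ξ') - rhoXi ξ' = rhoXi ξ' * (-δ) / ξ' := by
          rw [hξ'def]; field_simp [(show δ + ξ ≠ 0 by linarith)]; ring
        linarith
      have hρ'ub : rhoXi ξ' ≤ 30 * s / t := le_trans hmono hρub
      have hst0 : (0:ℝ) ≤ 30 * s / t := le_of_lt (div_pos (by linarith) ht0)
      have hCsP0 : (0:ℝ) ≤ (30 * s / t) * (C * s / P) := by
        apply mul_nonneg hst0
        apply le_of_lt (div_pos (mul_pos hC hs0) hP0)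
      calc rhoXi ξ - rhoXi ξ' ≤ rhoXi ξ' * (-δ) / ξ' := key
        _ ≤ (30 * s / t) * (C * s / P) / (ξ / 2) := by
            apply div_le_div₀ hCsP0 ?_ (by linarith) hξ'lb
            exact mul_le_mul hρ'ub hδabs hδ0 hst0
        _ = 60 * C / L ^ 2 := by
            rw [← htP, ← hs2]
            field_simp
            ring
        _ ≤ 100 * C / L ^ 2 := by
            apply (div_le_div_iff_of_pos_right (pow_pos hL0 2)).2
            linarith
  calc |rhoXi ξ' - rhoXi ξ| ≤ 100 * C / L ^ 2 := hgoal
    _ = 100 * C / Real.log (Real.log (Real.log x)) ^ 2 := by rw [hLdef, hξdef]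
end

section
/- There is a constant C such that for all x ≥ 3, all real y with 2 ≤ y ≤ log x, and all complex z with |z| = 1: | λ_{Ω,x}(y,z) − 1/F_Ω(y, 1/z) | ≤ C / log x. -/
set_option maxHeartbeats 1000000


open Real Filter Finset
open scoped Classical

/-- `P⁺(m)`: the largest prime factor of `m`, with `P⁺(1) = 1`. -/
def Pplus (m : ℕ) : ℕ := if m = 1 then 1 else m.primeFactors.sup id

/-- `λ_{Ω,x}(y, z) = ∑_{m ≥ 1, P⁺(m) ≤ y, Ω(m) ≤ (3/2) log log x} z^{−Ω(m)}/m`. -/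
noncomputable def lambdaBigOmega (x y : ℝ) (z : ℂ) : ℂ :=
  ∑' m : ℕ,
    if 1 ≤ m ∧ (Pplus m : ℝ) ≤ y ∧
        (m.primeFactorsList.length : ℝ) ≤ 3 / 2 * Real.log (Real.log x) then
      z ^ (-(m.primeFactorsList.length : ℤ)) / (m : ℂ)
    else 0

/-- `F_Ω(y, z) = ∏_{q ≤ y, q prime, q ≠ z} (1 − z/q)` (complex version). -/
noncomputable def FbigOmegaC (y : ℝ) (z : ℂ) : ℂ :=
  ∏ q ∈ (Finset.range (⌊y⌋₊ + 1)).filter Nat.Prime,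
    if (q : ℂ) = z then 1 else 1 - z / (q : ℂ)


/-- The completely multiplicative function `m ↦ w^Ω(m)/m`. -/
noncomputable def omegaHom {F : Type*} [Field F] (w : F) : ℕ →* F where
  toFun m := w ^ m.primeFactorsList.length / (m : F)
  map_one' := by simp
  map_mul' m n := by
    rcases eq_or_ne m 0 with rfl | hm
    · simp
    rcases eq_or_ne n 0 with rfl | hn
    · simp
    show w ^ (m*n).primeFactorsList.length / ((m*n : ℕ) : F) = _
    rw [(Nat.perm_primeFactorsList_mul hm hn).length_eq, List.length_append, pow_add,
      Nat.cast_mul, div_mul_div_comm]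

lemma omegaHom_apply {F : Type*} [Field F] (w : F) (m : ℕ) :
    omegaHom w m = w ^ m.primeFactorsList.length / (m : F) := rfl

lemma omegaHom_prime {F : Type*} [Field F] (w : F) {p : ℕ} (hp : p.Prime) :
    omegaHom w p = w / p := by
  rw [omegaHom_apply, Nat.primeFactorsList_prime hp, List.length_singleton, pow_one]

lemma norm_omegaHom_complex {w : ℂ} (hw : ‖w‖ = 1) {p : ℕ} (hp : p.Prime) :
    ‖omegaHom w p‖ < 1 := by
  rw [omegaHom_prime _ hp, norm_div, hw, Complex.norm_natCast]
  rw [div_lt_one (by exact_mod_cast hp.pos)]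
  exact_mod_cast hp.one_lt

lemma norm_omegaHom_real {p : ℕ} (hp : p.Prime) :
    ‖omegaHom (1.99 : ℝ) p‖ < 1 := by
  rw [omegaHom_prime _ hp, Real.norm_eq_abs, abs_div, abs_of_nonneg (by norm_num : (0:ℝ) ≤ 1.99),
    Nat.abs_cast, div_lt_one (by exact_mod_cast hp.pos)]
  have : (2 : ℝ) ≤ p := by exact_mod_cast hp.two_le
  linarith

lemma sum_log_primesBelow (N : ℕ) : ∑ p ∈ N.primesBelow, Real.log p ≤ N * Real.log 4 := by
  have h4 : (0:ℝ) ≤ Real.log 4 := Real.log_nonneg (by norm_num)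
  cases N with
  | zero => simp
  | succ n =>
    have hprod : (∏ p ∈ (n+1).primesBelow, (p:ℝ)) = (primorial n : ℝ) := by
      rw [primorial, Nat.cast_prod]
      rfl
    have hsum : ∑ p ∈ (n+1).primesBelow, Real.log p
        = Real.log (∏ p ∈ (n+1).primesBelow, (p:ℝ)) := by
      rw [Real.log_prod]
      intro p hp
      exact_mod_cast (Nat.prime_of_mem_primesBelow hp).pos.ne'
    rw [hsum, hprod]
    have h1 : (primorial n : ℝ) ≤ ((4:ℝ) ^ (n+1)) := by
      calc (primorial n : ℝ) ≤ ((4^n : ℕ) : ℝ) := by exact_mod_cast primorial_le_4_pow n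
        _ = (4:ℝ)^n := by push_cast; ring
        _ ≤ (4:ℝ)^(n+1) := by
            apply pow_le_pow_right₀ (by norm_num) (by omega)
    calc Real.log (primorial n) ≤ Real.log ((4:ℝ)^(n+1)) := by
          apply Real.log_le_log (by exact_mod_cast (primorial_pos n)) h1
      _ = ((n+1:ℕ)) * Real.log 4 := by rw [Real.log_pow]

lemma sum_inv_primesBelow (N : ℕ) :
    ∑ p ∈ N.primesBelow, ((p:ℝ))⁻¹ ≤ 4 * (1 + Real.log (Nat.log 2 N + 1)) := by
  classical
  set K := Nat.log 2 N with hK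
  have maps : ∀ p ∈ N.primesBelow, Nat.log 2 p ∈ range (K+1) := by
    intro p hp
    exact mem_range.mpr (Nat.lt_succ_of_le (Nat.log_mono_right
      (Nat.lt_of_mem_primesBelow hp).le))
  rw [← Finset.sum_fiberwise_of_maps_to maps (fun p => ((p:ℝ))⁻¹)]
  have hlog2 : (0:ℝ) < Real.log 2 := Real.log_pos (by norm_num)
  have fiber : ∀ k ∈ range (K+1),
      ∑ p ∈ N.primesBelow.filter (fun p => Nat.log 2 p = k), ((p:ℝ))⁻¹
        ≤ (if k = 0 then (0:ℝ) else 4 / (k:ℝ)) := by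
    intro k _
    set B := N.primesBelow.filter (fun p => Nat.log 2 p = k) with hB
    have hBmem : ∀ p ∈ B, p.Prime ∧ 2^k ≤ p ∧ p < 2^(k+1) := by
      intro p hp
      obtain ⟨hp1, hp2⟩ := mem_filter.mp hp
      have hprime := Nat.prime_of_mem_primesBelow hp1
      refine ⟨hprime, ?_, ?_⟩
      · calc 2^k = 2^(Nat.log 2 p) := by rw [hp2]
          _ ≤ p := Nat.pow_log_le_self 2 hprime.pos.ne'
      · calc p < 2^(Nat.log 2 p + 1) := Nat.lt_pow_succ_log_self (by norm_num) p
          _ = 2^(k+1) := by rw [hp2]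
    rcases eq_or_ne k 0 with rfl | hk
    · have : B = ∅ := by
        rw [Finset.filter_eq_empty_iff]
        intro p hp
        have hprime := Nat.prime_of_mem_primesBelow hp
        exact (Nat.log_pos (by norm_num) hprime.two_le).ne'
      simp [this]
    · have hk1 : 1 ≤ (k:ℝ) := by exact_mod_cast Nat.one_le_iff_ne_zero.mpr hk
      simp only [if_neg hk]
      -- card bound
      have hsub : B ⊆ (2^(k+1)).primesBelow := by
        intro p hp
        obtain ⟨hprime, _, hlt⟩ := hBmem p hp
        exact Nat.mem_primesBelow.mpr ⟨hlt, hprime⟩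
      have hcard : (B.card : ℝ) * (k * Real.log 2) ≤ (2:ℝ)^(k+1) * Real.log 4 := by
        calc (B.card : ℝ) * (k * Real.log 2) = ∑ _p ∈ B, (k:ℝ) * Real.log 2 := by
              rw [Finset.sum_const, nsmul_eq_mul]
          _ ≤ ∑ p ∈ B, Real.log p := by
              apply Finset.sum_le_sum
              intro p hp
              obtain ⟨hprime, hge, _⟩ := hBmem p hp
              calc (k:ℝ) * Real.log 2 = Real.log ((2:ℝ)^k) := by rw [Real.log_pow]
                _ ≤ Real.log p := by
                    apply Real.log_le_log (by positivity)
                    exact_mod_cast hge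
          _ ≤ ∑ p ∈ Nat.primesBelow (2^(k+1)), Real.log (p:ℝ) := by
              apply Finset.sum_le_sum_of_subset_of_nonneg hsub
              intro p hp _
              exact Real.log_natCast_nonneg p
          _ ≤ ((2^(k+1) : ℕ):ℝ) * Real.log 4 := sum_log_primesBelow _
          _ = (2:ℝ)^(k+1) * Real.log 4 := by push_cast; ring
      have hlog4 : Real.log 4 = 2 * Real.log 2 := by
        rw [show (4:ℝ) = 2^2 by norm_num, Real.log_pow]; push_cast; ring
      have hcard' : (B.card : ℝ) ≤ 2^(k+2) / k := by
        rw [hlog4] at hcard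
        rw [le_div_iff₀ (by positivity : (0:ℝ) < (k:ℝ))]
        have h2 : (2:ℝ)^(k+2) = 2 * 2^(k+1) := by ring
        nlinarith [hlog2]
      calc ∑ p ∈ B, ((p:ℝ))⁻¹ ≤ ∑ _p ∈ B, ((2:ℝ)^k)⁻¹ := by
            apply Finset.sum_le_sum
            intro p hp
            obtain ⟨hprime, hge, _⟩ := hBmem p hp
            apply inv_anti₀ (by positivity)
            exact_mod_cast hge
        _ = (B.card : ℝ) * ((2:ℝ)^k)⁻¹ := by rw [Finset.sum_const, nsmul_eq_mul]
        _ ≤ (2^(k+2) / k) * ((2:ℝ)^k)⁻¹ := by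
            apply mul_le_mul_of_nonneg_right hcard' (by positivity)
        _ = 4 / k := by
            rw [pow_add]
            field_simp
            ring
  calc ∑ k ∈ range (K+1), ∑ p ∈ N.primesBelow.filter (fun p => Nat.log 2 p = k), ((p:ℝ))⁻¹
      ≤ ∑ k ∈ range (K+1), (if k = 0 then 0 else 4 / (k:ℝ)) := Finset.sum_le_sum fiber
    _ = ∑ k ∈ range K, 4 / ((k+1 : ℕ):ℝ) := by
        rw [Finset.sum_range_succ']
        simp
    _ = 4 * (harmonic K : ℝ) := by
        rw [harmonic, Rat.cast_sum, Finset.mul_sum]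
        apply Finset.sum_congr rfl
        intro i _
        push_cast
        rw [div_eq_mul_inv]
    _ ≤ 4 * (1 + Real.log (K + 1)) := by
        have h1 := harmonic_le_one_add_log K
        have h2 : Real.log (K:ℝ) ≤ Real.log ((K:ℝ)+1) := by
          rcases Nat.eq_zero_or_pos K with hK0 | hKpos
          · rw [hK0]; simp
          · apply Real.log_le_log (by exact_mod_cast hKpos) (by linarith)
        linarith

lemma inv_one_sub_le_exp {t : ℝ} (ht : 2 ≤ t) : (1 - 1.99/t)⁻¹ ≤ Real.exp (1000/t) := by
  have ht0 : 0 < t := by linarith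
  have h1 : (0:ℝ) < 1 - 1.99/t := by
    rw [sub_pos, div_lt_one ht0]; linarith
  have h2 : Real.exp (-(1000/t)) ≤ 1 - 1.99/t := by
    have h3 := Real.add_one_le_exp (1000/t)
    rw [Real.exp_neg]
    have h5 : (Real.exp (1000/t))⁻¹ ≤ (1000/t + 1)⁻¹ := inv_anti₀ (by positivity) h3
    apply le_trans h5
    have h6 : (1000/t + 1)⁻¹ = t/(1000 + t) := by field_simp
    rw [h6, div_le_iff₀ (by positivity : (0:ℝ) < 1000 + t)]
    have h7 : (1 - 1.99/t) * (1000 + t) = 1000 + t - 1.99 - 1990/t := by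
      field_simp; ring
    rw [h7]
    have h8 : 1990/t ≤ 995 := by
      rw [div_le_iff₀ ht0]; linarith
    linarith
  calc (1 - 1.99/t)⁻¹ ≤ (Real.exp (-(1000/t)))⁻¹ := inv_anti₀ (Real.exp_pos _) h2
    _ = Real.exp (1000/t) := by rw [← Real.exp_neg, neg_neg]

lemma prod_primesBelow_le (N : ℕ) :
    ∏ p ∈ N.primesBelow, (1 - 1.99/(p:ℝ))⁻¹
      ≤ Real.exp (4000 * (1 + Real.log (Nat.log 2 N + 1))) := by
  have hpt : ∀ p ∈ N.primesBelow, (1 - 1.99/(p:ℝ))⁻¹ ≤ Real.exp (1000/(p:ℝ)) := by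
    intro p hp
    have h2 : (2:ℝ) ≤ p := by exact_mod_cast (Nat.prime_of_mem_primesBelow hp).two_le
    exact inv_one_sub_le_exp h2
  have hnn : ∀ p ∈ N.primesBelow, (0:ℝ) ≤ (1 - 1.99/(p:ℝ))⁻¹ := by
    intro p hp
    have h2 : (2:ℝ) ≤ p := by exact_mod_cast (Nat.prime_of_mem_primesBelow hp).two_le
    have : (0:ℝ) < 1 - 1.99/p := by
      rw [sub_pos, div_lt_one (by linarith)]; linarith
    positivity
  calc ∏ p ∈ N.primesBelow, (1 - 1.99/(p:ℝ))⁻¹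
      ≤ ∏ p ∈ N.primesBelow, Real.exp (1000/(p:ℝ)) := Finset.prod_le_prod hnn hpt
    _ = Real.exp (∑ p ∈ N.primesBelow, 1000/(p:ℝ)) := (Real.exp_sum _ _).symm
    _ = Real.exp (1000 * ∑ p ∈ N.primesBelow, ((p:ℝ))⁻¹) := by
        rw [mul_sum]
        congr 1
    _ ≤ Real.exp (4000 * (1 + Real.log (Nat.log 2 N + 1))) := by
        apply Real.exp_le_exp.mpr
        have := sum_inv_primesBelow N
        linarith

theorem lambdaBigOmega_estimate :
    ∃ C : ℝ, ∀ x ≥ (3 : ℝ), ∀ y : ℝ, 2 ≤ y → y ≤ Real.log x → ∀ z : ℂ, ‖z‖ = 1 →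
      ‖lambdaBigOmega x y z - 1 / FbigOmegaC y (1 / z)‖ ≤ C / Real.log x := by
  refine ⟨Real.exp (4001 + 4000 * Real.log 400000), ?_⟩
  intro x hx y hy2 hyx z hz
  have hy0 : (0:ℝ) ≤ y := by linarith
  have hz0 : z ≠ 0 := by
    intro h; rw [h] at hz; simp at hz
  have hwnorm : ‖(1/z : ℂ)‖ = 1 := by
    rw [norm_div, hz, norm_one, div_one]
  have hL1 : 1 < Real.log x := by
    have he : Real.exp 1 < 3 := by
      have := Real.exp_one_lt_d9
      linarith
    calc (1:ℝ) = Real.log (Real.exp 1) := (Real.log_exp 1).symm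
      _ < Real.log x := Real.log_lt_log (Real.exp_pos 1) (lt_of_lt_of_le he hx)
  have hL0 : 0 < Real.log x := lt_trans one_pos hL1
  have hxi : 0 < Real.log (Real.log x) := Real.log_pos hL1
  set ξ : ℝ := Real.log (Real.log x) with hxidef
  set N : ℕ := ⌊y⌋₊ + 1 with hNdef
  have hfl2 : 2 ≤ ⌊y⌋₊ := Nat.le_floor (by exact_mod_cast hy2)
  -- the two completely multiplicative functions
  set f : ℕ →* ℂ := omegaHom (1/z : ℂ) with hfdef
  set g : ℕ →* ℝ := omegaHom (1.99 : ℝ) with hgdef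
  obtain ⟨hsum1, hP⟩ :=
    EulerProduct.summable_and_hasSum_smoothNumbers_prod_primesBelow_geometric
      (f := f) (fun hp => norm_omegaHom_complex hwnorm hp) N
  obtain ⟨hsum2, hG⟩ :=
    EulerProduct.summable_and_hasSum_smoothNumbers_prod_primesBelow_geometric
      (f := g) (fun hp => norm_omegaHom_real hp) N
  set P : ℂ := ∏ p ∈ N.primesBelow, (1 - f p)⁻¹ with hPdef
  set G : ℝ := ∏ p ∈ N.primesBelow, (1 - g p)⁻¹ with hGdef
  -- membership translation
  have hmem : ∀ m : ℕ, (1 ≤ m ∧ (Pplus m : ℝ) ≤ y) ↔ m ∈ N.smoothNumbers := by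
    intro m
    rw [Nat.mem_smoothNumbers]
    constructor
    · rintro ⟨h1, h2⟩
      have hm0 : m ≠ 0 := by omega
      refine ⟨hm0, fun p hp => ?_⟩
      rcases eq_or_ne m 1 with rfl | hm1
      · simp [Nat.primeFactorsList_one] at hp
      have hPp : Pplus m = m.primeFactors.sup id := if_neg hm1
      have hfloor : Pplus m ≤ ⌊y⌋₊ := Nat.le_floor h2
      have hple : p ≤ m.primeFactors.sup id :=
        Finset.le_sup (f := id) (Nat.mem_primeFactors_iff_mem_primeFactorsList.mpr hp)
      rw [hPp] at hfloor
      omega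
    · rintro ⟨hm0, hall⟩
      refine ⟨Nat.one_le_iff_ne_zero.mpr hm0, ?_⟩
      rcases eq_or_ne m 1 with rfl | hm1
      · have : Pplus 1 = 1 := if_pos rfl
        rw [this]; exact_mod_cast (by linarith : (1:ℝ) ≤ y)
      · have hPp : Pplus m = m.primeFactors.sup id := if_neg hm1
        rw [hPp]
        have hsup : m.primeFactors.sup id ≤ ⌊y⌋₊ := by
          apply Finset.sup_le
          intro p hp
          have := hall p (Nat.mem_primeFactors_iff_mem_primeFactorsList.mp hp)
          simp only [id]
          omega
        calc ((m.primeFactors.sup id : ℕ) : ℝ) ≤ (⌊y⌋₊ : ℝ) := by exact_mod_cast hsup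
          _ ≤ y := Nat.floor_le hy0
  -- rewrite lambda as a sum over smooth numbers
  have hval : ∀ m : ℕ, z ^ (-(m.primeFactorsList.length : ℤ)) / (m : ℂ) = f m := by
    intro m
    rw [hfdef, omegaHom_apply, zpow_neg, zpow_natCast, ← inv_pow, one_div]
  have hfun : (fun m : ℕ =>
      if 1 ≤ m ∧ (Pplus m : ℝ) ≤ y ∧ ((m.primeFactorsList.length : ℝ) ≤ 3/2 * ξ) then
        z ^ (-(m.primeFactorsList.length : ℤ)) / (m : ℂ) else 0)
      = (fun m : ℕ =>
      if m ∈ N.smoothNumbers ∧ ((m.primeFactorsList.length : ℝ) ≤ 3/2 * ξ) then f m else 0) := by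
    funext m
    have hiff : (1 ≤ m ∧ (Pplus m : ℝ) ≤ y ∧ ((m.primeFactorsList.length : ℝ) ≤ 3/2 * ξ))
        ↔ (m ∈ N.smoothNumbers ∧ ((m.primeFactorsList.length : ℝ) ≤ 3/2 * ξ)) := by
      rw [← hmem m, and_assoc]
    by_cases h : m ∈ N.smoothNumbers ∧ ((m.primeFactorsList.length : ℝ) ≤ 3/2 * ξ)
    · rw [if_pos h, if_pos (hiff.mpr h), hval m]
    · rw [if_neg h, if_neg (fun hh => h (hiff.mp hh))]
  have hlam : lambdaBigOmega x y z
      = ∑' m : N.smoothNumbers,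
          (if ((m : ℕ).primeFactorsList.length : ℝ) ≤ 3/2 * ξ then f m else 0) := by
    unfold lambdaBigOmega
    rw [hfun]
    rw [← tsum_subtype_eq_of_support_subset (s := N.smoothNumbers) (by
      intro m hm
      simp only [Function.mem_support] at hm
      by_contra hns
      exact hm (if_neg (fun hh => hns hh.1)))]
    apply tsum_congr
    intro m
    have hm := m.2
    by_cases h : (((m : ℕ).primeFactorsList.length : ℝ) ≤ 3/2 * ξ)
    · rw [if_pos ⟨hm, h⟩, if_pos h]
    · rw [if_neg (fun hh => h hh.2), if_neg h]
  -- split off the tail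
  set T : ℂ := ∑' m : N.smoothNumbers,
      (if ¬ (((m : ℕ).primeFactorsList.length : ℝ) ≤ 3/2 * ξ) then f ↑m else 0) with hTdef
  have hsummf : Summable (fun m : N.smoothNumbers => f ↑m) := Summable.of_norm hsum1
  have hnormite : ∀ m : N.smoothNumbers,
      ‖(if ¬ (((m : ℕ).primeFactorsList.length : ℝ) ≤ 3/2 * ξ) then f ↑m else 0)‖ ≤ ‖f ↑m‖ := by
    intro m
    by_cases h : (((m : ℕ).primeFactorsList.length : ℝ) ≤ 3/2 * ξ) <;> simp [h]
  have hsumite_norm : Summable (fun m : N.smoothNumbers =>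
      ‖(if ¬ (((m : ℕ).primeFactorsList.length : ℝ) ≤ 3/2 * ξ) then f ↑m else 0)‖) :=
    Summable.of_nonneg_of_le (fun m => norm_nonneg _) hnormite hsum1
  have hsumite : Summable (fun m : N.smoothNumbers =>
      (if ¬ (((m : ℕ).primeFactorsList.length : ℝ) ≤ 3/2 * ξ) then f ↑m else 0)) :=
    hsumite_norm.of_norm
  have hlam2 : lambdaBigOmega x y z = P - T := by
    rw [hlam, hTdef, ← hP.tsum_eq, ← Summable.tsum_sub hsummf hsumite]
    apply tsum_congr
    intro m
    by_cases h : (((m : ℕ).primeFactorsList.length : ℝ) ≤ 3/2 * ξ) <;> simp [h]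
  -- the product form of 1/F
  have hFfac : ∀ q ∈ N.primesBelow,
      (if (q : ℂ) = 1/z then 1 else 1 - (1/z) / (q : ℂ)) = 1 - f q := by
    intro q hq
    have hqp := Nat.prime_of_mem_primesBelow hq
    have hne : (q : ℂ) ≠ 1/z := by
      intro h
      have h1 : ‖(q : ℂ)‖ = 1 := by rw [h, hwnorm]
      rw [Complex.norm_natCast] at h1
      have h2 : (2:ℝ) ≤ (q:ℝ) := by exact_mod_cast hqp.two_le
      linarith
    rw [if_neg hne, hfdef, omegaHom_prime _ hqp]
  have hFeq : FbigOmegaC y (1/z) = ∏ p ∈ N.primesBelow, (1 - f p) := by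
    unfold FbigOmegaC
    rw [show (Finset.range (⌊y⌋₊ + 1)).filter Nat.Prime = N.primesBelow from
      Finset.filter_congr_decidable _ _ _]
    exact Finset.prod_congr rfl hFfac
  have hFinv : 1 / FbigOmegaC y (1/z) = P := by
    rw [hFeq, hPdef, one_div, ← Finset.prod_inv_distrib]
  have hdiff : lambdaBigOmega x y z - 1 / FbigOmegaC y (1/z) = -T := by
    rw [hlam2, hFinv]; ring
  rw [hdiff, norm_neg]
  -- pointwise bound on the tail terms
  set c : ℝ := Real.exp (-(3/2 * ξ) * Real.log 1.99) with hcdef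
  have hl99 : (0:ℝ) < Real.log 1.99 := Real.log_pos (by norm_num)
  have hpt2 : ∀ m : N.smoothNumbers,
      ‖(if ¬ (((m : ℕ).primeFactorsList.length : ℝ) ≤ 3/2 * ξ) then f ↑m else 0)‖
        ≤ c * g ↑m := by
    intro m
    have hm0 : (m : ℕ) ≠ 0 := m.2.1
    have hmr : (0:ℝ) < ((m : ℕ) : ℝ) := by exact_mod_cast Nat.pos_of_ne_zero hm0
    have hgm : g (m : ℕ) = 1.99 ^ (m : ℕ).primeFactorsList.length / ((m : ℕ) : ℝ) :=
      omegaHom_apply _ _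
    by_cases h : (((m : ℕ).primeFactorsList.length : ℝ) ≤ 3/2 * ξ)
    · rw [if_neg (not_not_intro h), norm_zero]
      have hgnn : (0:ℝ) ≤ 1.99 ^ (m : ℕ).primeFactorsList.length / ((m : ℕ) : ℝ) := by
        positivity
      have hc0 : (0:ℝ) < c := Real.exp_pos _
      rw [hgm]
      positivity
    · rw [if_pos h]
      have hnf : ‖f (m : ℕ)‖ = 1 / ((m : ℕ) : ℝ) := by
        rw [hfdef, omegaHom_apply, norm_div, norm_pow, hwnorm, one_pow,
          Complex.norm_natCast]
      rw [hnf, hgm]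
      rw [div_eq_mul_inv (1:ℝ), div_eq_mul_inv ((1.99:ℝ) ^ _), ← mul_assoc]
      apply mul_le_mul_of_nonneg_right _ (by positivity)
      -- 1 ≤ c * 1.99 ^ len
      have hpow : (1.99:ℝ) ^ (m : ℕ).primeFactorsList.length
          = Real.exp (((m : ℕ).primeFactorsList.length : ℝ) * Real.log 1.99) := by
        rw [← Real.log_pow, Real.exp_log (by positivity)]
      rw [hcdef, hpow, ← Real.exp_add]
      rw [show (1:ℝ) = Real.exp 0 from (Real.exp_zero).symm]
      apply Real.exp_le_exp.mpr
      push_neg at h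
      nlinarith [h.le, hl99]
  -- sum the bound
  have hsummg : Summable (fun m : N.smoothNumbers => c * g ↑m) :=
    (Summable.of_norm hsum2).mul_left c
  have hTb : ‖T‖ ≤ c * G := by
    calc ‖T‖ ≤ ∑' m : N.smoothNumbers,
        ‖(if ¬ (((m : ℕ).primeFactorsList.length : ℝ) ≤ 3/2 * ξ) then f ↑m else 0)‖ :=
          norm_tsum_le_tsum_norm hsumite_norm
      _ ≤ ∑' m : N.smoothNumbers, c * g ↑m :=
          Summable.tsum_le_tsum hpt2 hsumite_norm hsummg
      _ = c * ∑' m : N.smoothNumbers, g ↑m := tsum_mul_left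
      _ = c * G := by rw [hG.tsum_eq]
  -- bound G by the exponential of the prime reciprocal sum
  have hGb : G ≤ Real.exp (4000 * (1 + Real.log (Nat.log 2 N + 1))) := by
    have heq : G = ∏ p ∈ N.primesBelow, (1 - 1.99/(p:ℝ))⁻¹ := by
      rw [hGdef]
      apply Finset.prod_congr rfl
      intro p hp
      rw [hgdef, omegaHom_prime _ (Nat.prime_of_mem_primesBelow hp)]
    rw [heq]
    exact prod_primesBelow_le N
  -- numeric bounds
  have hlog2 := Real.log_two_gt_d9
  have hKb : ((Nat.log 2 N : ℝ) + 1) ≤ 2 * ξ + 2 := by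
    have hj : (2:ℕ) ^ (Nat.log 2 N) ≤ N := Nat.pow_log_le_self 2 (by omega)
    have hjr : ((Nat.log 2 N : ℝ)) * Real.log 2 ≤ Real.log N := by
      calc ((Nat.log 2 N : ℝ)) * Real.log 2 = Real.log ((2:ℝ) ^ (Nat.log 2 N)) := by
            rw [Real.log_pow]
        _ ≤ Real.log N := Real.log_le_log (by positivity) (by exact_mod_cast hj)
    have hNr : (N:ℝ) ≤ 2 * Real.log x := by
      have hfle : (⌊y⌋₊ : ℝ) ≤ y := Nat.floor_le hy0
      have : (N:ℝ) = (⌊y⌋₊ : ℝ) + 1 := by rw [hNdef]; push_cast; ring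
      rw [this]
      linarith
    have hlogN : Real.log N ≤ Real.log 2 + ξ := by
      calc Real.log N ≤ Real.log (2 * Real.log x) := by
            apply Real.log_le_log _ hNr
            have : (0:ℕ) < N := by omega
            exact_mod_cast this
        _ = Real.log 2 + ξ := by rw [Real.log_mul (by norm_num) (ne_of_gt hL0), hxidef]
    nlinarith [hjr, hlogN, hlog2, hxi]
  have hlr : (0.688:ℝ) ≤ Real.log 1.99 := by
    have h1 : Real.log (2/1.99) ≤ 2/1.99 - 1 := Real.log_le_sub_one_of_pos (by norm_num)
    rw [Real.log_div (by norm_num) (by norm_num)] at h1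
    have h2 : (2:ℝ)/1.99 - 1 ≤ 0.0051 := by norm_num
    linarith
  have hlogK : Real.log ((Nat.log 2 N : ℝ) + 1) ≤ Real.log (2 * ξ + 2) :=
    Real.log_le_log (by positivity) hKb
  have hlog2xi : Real.log (2 * ξ + 2) ≤ (2 * ξ + 2) / 400000 + Real.log 400000 := by
    have h := Real.log_le_sub_one_of_pos (show (0:ℝ) < (2 * ξ + 2) / 400000 by positivity)
    rw [Real.log_div (by positivity) (by norm_num)] at h
    linarith
  -- final assembly
  calc ‖T‖ ≤ c * G := hTb
    _ ≤ c * Real.exp (4000 * (1 + Real.log (Nat.log 2 N + 1))) := by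
        apply mul_le_mul_of_nonneg_left hGb (le_of_lt (Real.exp_pos _))
    _ = Real.exp (-(3/2 * ξ) * Real.log 1.99 + 4000 * (1 + Real.log (Nat.log 2 N + 1))) := by
        rw [hcdef, ← Real.exp_add]
    _ ≤ Real.exp ((4001 + 4000 * Real.log 400000) - ξ) := by
        apply Real.exp_le_exp.mpr
        have e1 : (4000:ℝ) * (1 + Real.log (Nat.log 2 N + 1))
            ≤ 4000 + 4000 * ((2 * ξ + 2) / 400000 + Real.log 400000) := by
          have := hlogK.trans hlog2xi
          linarith
        have e2 : -(3/2 * ξ) * Real.log 1.99 ≤ -(1.032) * ξ := by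
          have h := mul_le_mul_of_nonneg_left hlr hxi.le
          linarith
        linarith [e1, e2, hxi.le]
    _ = Real.exp (4001 + 4000 * Real.log 400000) / Real.log x := by
        rw [Real.exp_sub, hxidef, Real.exp_log hL0]
end
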